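/- arXiv:2002.07247 — 4 statements merged into one kernel-verified Lean document; each statement's English description precedes it below -/
import Mathlib

section
/- Under the setting of the half-space problem, with v = uₓₙ > 0, w = uₓₙₓₙ, z = (1+xₙ)v, and ξ = w/z, if additionally f'' ≥ 0 on (0,∞), then ξ satisfies the differential inequality -Δξ ≥ 2ξ² + 2(∇z/z)·∇ξ on Ω. -/
open Metric MeasureTheory Set

noncomputable def pd {n : ℕ} (i : Fin n) (u : EuclideanSpace ℝ (Fin n) → ℝ) :
    EuclideanSpace ℝ (Fin n) → ℝ :=
  fun x => fderiv ℝ u x (EuclideanSpace.single i 1)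

noncomputable def lap {n : ℕ} (u : EuclideanSpace ℝ (Fin n) → ℝ)
    (x : EuclideanSpace ℝ (Fin n)) : ℝ :=
  ∑ i, pd i (pd i u) x

variable {m : ℕ} {s : Set (EuclideanSpace ℝ (Fin m))} {x : EuclideanSpace ℝ (Fin m)}
  {g h : EuclideanSpace ℝ (Fin m) → ℝ}

lemma pd_contDiffOn {k : ℕ} (hs : IsOpen s) (hg : ContDiffOn ℝ (k+1) g s) (i : Fin m) :
    ContDiffOn ℝ k (pd i g) s :=
  (hg.fderiv_of_isOpen hs (by exact_mod_cast le_refl ((k:ℕ∞)+1))).clm_apply contDiffOn_const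

lemma pd_congr (i : Fin m) (hgh : g =ᶠ[nhds x] h) : pd i g x = pd i h x := by
  unfold pd; rw [hgh.fderiv_eq]

lemma pd_hasFDerivAt {g' : EuclideanSpace ℝ (Fin m) →L[ℝ] ℝ} (i : Fin m)
    (hg : HasFDerivAt g g' x) : pd i g x = g' (EuclideanSpace.single i 1) := by
  unfold pd; rw [hg.fderiv]

lemma pd_mul (i : Fin m) (hg : DifferentiableAt ℝ g x) (hh : DifferentiableAt ℝ h x) :
    pd i (fun y => g y * h y) x = pd i g x * h x + g x * pd i h x := by
  rw [pd_hasFDerivAt i (hg.hasFDerivAt.fun_mul hh.hasFDerivAt)]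
  simp [pd]; ring

lemma pd_neg (i : Fin m) : pd i (fun y => -g y) x = -pd i g x := by
  unfold pd; rw [fderiv_fun_neg]; simp

lemma pd_comp (i : Fin m) {φ : ℝ → ℝ} (hφ : DifferentiableAt ℝ φ (g x))
    (hg : DifferentiableAt ℝ g x) :
    pd i (fun y => φ (g y)) x = deriv φ (g x) * pd i g x := by
  have H : HasFDerivAt (fun y => φ (g y)) (deriv φ (g x) • fderiv ℝ g x) x :=
    hφ.hasDerivAt.comp_hasFDerivAt x hg.hasFDerivAt
  rw [pd_hasFDerivAt i H]; simp [pd, mul_comm]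

lemma pd_coord (i j : Fin m) : pd i (fun y => y j) x = if i = j then 1 else 0 := by
  have e : (fun y : EuclideanSpace ℝ (Fin m) => y j) = (EuclideanSpace.proj (𝕜 := ℝ) j) := rfl
  rw [e, pd_hasFDerivAt i (EuclideanSpace.proj (𝕜 := ℝ) j).hasFDerivAt]
  simp [EuclideanSpace.single_apply]
  exact if_congr eq_comm rfl rfl

lemma pd_sum {ι : Type*} (t : Finset ι) (F : ι → EuclideanSpace ℝ (Fin m) → ℝ)
    (hF : ∀ j ∈ t, DifferentiableAt ℝ (F j) x) (i : Fin m) :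
    pd i (fun y => ∑ j ∈ t, F j y) x = ∑ j ∈ t, pd i (F j) x := by
  have H : HasFDerivAt (fun y => ∑ j ∈ t, F j y) (∑ j ∈ t, fderiv ℝ (F j) x) x :=
    HasFDerivAt.fun_sum (fun j hj => (hF j hj).hasFDerivAt)
  rw [pd_hasFDerivAt i H]; simp [pd]

lemma pd_comm (hs : IsOpen s) (hg : ContDiffOn ℝ 2 g s) (i j : Fin m) (hx : x ∈ s) :
    pd i (pd j g) x = pd j (pd i g) x := by
  have hf' : ContDiffOn ℝ 1 (fderiv ℝ g) s := hg.fderiv_of_isOpen hs (by norm_num)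
  have hd2 : DifferentiableAt ℝ (fderiv ℝ g) x :=
    (hf'.contDiffAt (hs.mem_nhds hx)).differentiableAt one_ne_zero
  have hev : ∀ᶠ y in nhds x, HasFDerivAt g (fderiv ℝ g y) y := by
    filter_upwards [hs.mem_nhds hx] with y hy
    exact ((hg.contDiffAt (hs.mem_nhds hy)).differentiableAt two_ne_zero).hasFDerivAt
  have hsymm := second_derivative_symmetric_of_eventually hev hd2.hasFDerivAt
  have key : ∀ a b : Fin m, pd a (pd b g) x
      = fderiv ℝ (fderiv ℝ g) x (EuclideanSpace.single a 1) (EuclideanSpace.single b 1) := by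
    intro a b
    have H := hd2.hasFDerivAt.clm_apply
      (hasFDerivAt_const (EuclideanSpace.single b 1 : EuclideanSpace ℝ (Fin m)) x)
    show pd a (fun y => fderiv ℝ g y (EuclideanSpace.single b 1)) x = _
    rw [pd_hasFDerivAt a H]; simp
  rw [key i j, key j i, hsymm]

lemma diffAt_of_contDiffOn (hs : IsOpen s) (h : ContDiffOn ℝ 1 g s) (hx : x ∈ s) :
    DifferentiableAt ℝ g x :=
  (h.contDiffAt (hs.mem_nhds hx)).differentiableAt one_ne_zero

lemma lap_pd_comm (hs : IsOpen s) (hg : ContDiffOn ℝ 3 g s) (ν : Fin m) (hx : x ∈ s) :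
    lap (pd ν g) x = pd ν (lap g) x := by
  have hg2 : ContDiffOn ℝ 2 g s := hg.of_le (by norm_num)
  have hpd2 : ∀ i : Fin m, ContDiffOn ℝ 2 (pd i g) s := by
    intro i
    have := pd_contDiffOn (k := 2) hs (by exact_mod_cast hg) i
    exact_mod_cast this
  have step : ∀ i : Fin m, pd i (pd i (pd ν g)) x = pd ν (pd i (pd i g)) x := by
    intro i
    have e1 : pd i (pd ν g) =ᶠ[nhds x] pd ν (pd i g) := by
      filter_upwards [hs.mem_nhds hx] with y hy
      exact pd_comm hs hg2 i ν hy
    rw [pd_congr i e1, pd_comm hs (hpd2 i) i ν hx]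
  have hdiff : ∀ i : Fin m, DifferentiableAt ℝ (pd i (pd i g)) x := by
    intro i
    have h1 : ContDiffOn ℝ 1 (pd i (pd i g)) s :=
      (pd_contDiffOn (k := 1) hs (by exact_mod_cast hpd2 i) i)
    exact diffAt_of_contDiffOn hs h1 hx
  calc lap (pd ν g) x = ∑ i, pd ν (pd i (pd i g)) x := by
        unfold lap; exact Finset.sum_congr rfl fun i _ => step i
    _ = pd ν (lap g) x := by
        unfold lap
        rw [pd_sum Finset.univ (fun i y => pd i (pd i g) y) (fun j _ => hdiff j) ν]

lemma pd_add (i : Fin m) (hg : DifferentiableAt ℝ g x) (hh : DifferentiableAt ℝ h x) :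
    pd i (fun y => g y + h y) x = pd i g x + pd i h x := by
  rw [pd_hasFDerivAt i (hg.hasFDerivAt.fun_add hh.hasFDerivAt)]; simp [pd]

lemma pd_const_mul (i : Fin m) (c : ℝ) (hg : DifferentiableAt ℝ g x) :
    pd i (fun y => c * g y) x = c * pd i g x := by
  rw [pd_hasFDerivAt i (hg.hasFDerivAt.const_mul c)]; simp [pd]

lemma hasFDerivAt_oneAddCoord (j : Fin m) (x : EuclideanSpace ℝ (Fin m)) :
    HasFDerivAt (fun y : EuclideanSpace ℝ (Fin m) => 1 + y j)
      (EuclideanSpace.proj (𝕜 := ℝ) j) x := by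
  have e : (fun y : EuclideanSpace ℝ (Fin m) => 1 + y j)
      = (fun y => (1 : ℝ) + EuclideanSpace.proj (𝕜 := ℝ) j y) := rfl
  rw [e]
  exact (EuclideanSpace.proj (𝕜 := ℝ) j).hasFDerivAt.const_add (1 : ℝ)

lemma pd_one_add_coord (i j : Fin m) :
    pd i (fun y => 1 + y j) x = if i = j then 1 else 0 := by
  rw [pd_hasFDerivAt i (hasFDerivAt_oneAddCoord j x)]
  simp [EuclideanSpace.single_apply]
  exact if_congr eq_comm rfl rfl

lemma lap_congr_on (hs : IsOpen s) (hx : x ∈ s) (e : ∀ y ∈ s, g y = h y) :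
    lap g x = lap h x := by
  unfold lap
  refine Finset.sum_congr rfl fun i _ => ?_
  refine pd_congr i ?_
  filter_upwards [hs.mem_nhds hx] with y hy
  exact pd_congr i (by filter_upwards [hs.mem_nhds hy] with z hz using e z hz)

lemma lap_mul (hs : IsOpen s) (hg : ContDiffOn ℝ 2 g s) (hh : ContDiffOn ℝ 2 h s) (hx : x ∈ s) :
    lap (fun y => g y * h y) x
      = lap g x * h x + 2 * ∑ i, pd i g x * pd i h x + g x * lap h x := by
  have hg1 : ContDiffOn ℝ 1 g s := hg.of_le (by norm_num)
  have hh1 : ContDiffOn ℝ 1 h s := hh.of_le (by norm_num)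
  have hpdg : ∀ i : Fin m, ContDiffOn ℝ 1 (pd i g) s :=
    fun i => pd_contDiffOn (k := 1) hs (by exact_mod_cast hg) i
  have hpdh : ∀ i : Fin m, ContDiffOn ℝ 1 (pd i h) s :=
    fun i => pd_contDiffOn (k := 1) hs (by exact_mod_cast hh) i
  have key : ∀ i : Fin m, pd i (pd i (fun y => g y * h y)) x
      = pd i (pd i g) x * h x + 2 * (pd i g x * pd i h x) + g x * pd i (pd i h) x := by
    intro i
    have e1 : pd i (fun y => g y * h y) =ᶠ[nhds x]
        (fun y => pd i g y * h y + g y * pd i h y) := by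
      filter_upwards [hs.mem_nhds hx] with y hy
      exact pd_mul i (diffAt_of_contDiffOn hs hg1 hy) (diffAt_of_contDiffOn hs hh1 hy)
    rw [pd_congr i e1]
    have d1 : DifferentiableAt ℝ (pd i g) x := diffAt_of_contDiffOn hs (hpdg i) hx
    have d2 : DifferentiableAt ℝ (pd i h) x := diffAt_of_contDiffOn hs (hpdh i) hx
    have d3 : DifferentiableAt ℝ g x := diffAt_of_contDiffOn hs hg1 hx
    have d4 : DifferentiableAt ℝ h x := diffAt_of_contDiffOn hs hh1 hx
    rw [pd_add i ((d1.fun_mul d4)) ((d3.fun_mul d2)), pd_mul i d1 d4, pd_mul i d3 d2]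
    ring
  unfold lap
  rw [Finset.sum_congr rfl fun i _ => key i]
  rw [Finset.sum_add_distrib, Finset.sum_add_distrib, ← Finset.sum_mul, ← Finset.mul_sum,
    ← Finset.mul_sum]

lemma gradient_apply_pd (g : EuclideanSpace ℝ (Fin m) → ℝ) (x : EuclideanSpace ℝ (Fin m))
    (i : Fin m) : gradient g x i = pd i g x := by
  have h1 : (inner ℝ (gradient g x) (EuclideanSpace.single i 1) : ℝ)
      = fderiv ℝ g x (EuclideanSpace.single i 1) := by
    unfold gradient
    exact InnerProductSpace.toDual_symm_apply
  have h2 : (inner ℝ (gradient g x) (EuclideanSpace.single i 1) : ℝ) = gradient g x i := by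
    rw [EuclideanSpace.inner_single_right]; simp
  rw [← h2, h1]; rfl

lemma inner_grads (g h : EuclideanSpace ℝ (Fin m) → ℝ) (x : EuclideanSpace ℝ (Fin m)) :
    (inner ℝ (gradient g x) (gradient h x) : ℝ) = ∑ i, pd i g x * pd i h x := by
  rw [PiLp.inner_apply]
  exact Finset.sum_congr rfl fun i _ => by
    rw [gradient_apply_pd, gradient_apply_pd]; simp [mul_comm]

/-- In the half-space setting with `v = uₓₙ > 0`, `w = uₓₙₓₙ`, `z = (1+xₙ)v`, `ξ = w/z`,
if `f'' ≥ 0` on `(0,∞)` then `-Δξ ≥ 2ξ² + 2(∇z/z)·∇ξ` on `Ω`. -/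
theorem stmt6 {n : ℕ} {Ω : Set (EuclideanSpace ℝ (Fin (n + 1)))} (hΩ : IsOpen Ω)
    (hΩhalf : Ω ⊆ {x | 0 < x (Fin.last n)})
    (f : ℝ → ℝ) (hf : ContDiffOn ℝ 2 f (Set.Ioi 0))
    (hconv : ∀ s > (0 : ℝ), 0 ≤ deriv (deriv f) s)
    (u : EuclideanSpace ℝ (Fin (n + 1)) → ℝ) (hu : ContDiffOn ℝ 4 u Ω)
    (hupos : ∀ x ∈ Ω, 0 < u x)
    (heq : ∀ x ∈ Ω, -lap u x = f (u x))
    (hv : ∀ x ∈ Ω, 0 < pd (Fin.last n) u x) :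
    ∀ x ∈ Ω,
      -lap (fun y =>
          pd (Fin.last n) (pd (Fin.last n) u) y /
            ((1 + y (Fin.last n)) * pd (Fin.last n) u y)) x ≥
        2 * (pd (Fin.last n) (pd (Fin.last n) u) x /
              ((1 + x (Fin.last n)) * pd (Fin.last n) u x)) ^ 2
          + 2 * (inner ℝ
              (((1 + x (Fin.last n)) * pd (Fin.last n) u x)⁻¹ •
                gradient (fun y => (1 + y (Fin.last n)) * pd (Fin.last n) u y) x)
              (gradient (fun y =>
                pd (Fin.last n) (pd (Fin.last n) u) y /
                  ((1 + y (Fin.last n)) * pd (Fin.last n) u y)) x) : ℝ) := by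
  intro x hx
  set ν := Fin.last n with hν
  set V := pd ν u with hVdef
  set W := pd ν V with hWdef
  set Z : EuclideanSpace ℝ (Fin (n+1)) → ℝ := fun y => (1 + y ν) * V y with hZdef
  set Xi : EuclideanSpace ℝ (Fin (n+1)) → ℝ := fun y => W y / ((1 + y ν) * V y) with hXidef
  -- regularity
  have hu3 : ContDiffOn ℝ 3 u Ω := hu.of_le (by norm_num)
  have hV3 : ContDiffOn ℝ 3 V Ω := by
    rw [hVdef]
    exact_mod_cast pd_contDiffOn (k := 3) hΩ (by exact_mod_cast hu) ν
  have hW2 : ContDiffOn ℝ 2 W Ω := by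
    rw [hWdef]
    exact_mod_cast pd_contDiffOn (k := 2) hΩ (by exact_mod_cast hV3) ν
  have hcoord : ContDiff ℝ 2 (fun y : EuclideanSpace ℝ (Fin (n+1)) => 1 + y ν) := by
    have e : (fun y : EuclideanSpace ℝ (Fin (n+1)) => 1 + y ν)
        = fun y => (1 : ℝ) + EuclideanSpace.proj (𝕜 := ℝ) ν y := rfl
    rw [e]
    exact contDiff_const.add (EuclideanSpace.proj (𝕜 := ℝ) ν).contDiff
  have hZ2 : ContDiffOn ℝ 2 Z Ω := by
    rw [hZdef]
    exact hcoord.contDiffOn.mul (hV3.of_le (by norm_num))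
  have hZpos : ∀ y ∈ Ω, 0 < Z y := by
    intro y hy
    have h1 : 0 < y ν := hΩhalf hy
    exact mul_pos (by linarith) (hv y hy)
  have hXi2 : ContDiffOn ℝ 2 Xi Ω := by
    rw [hXidef]
    exact hW2.div (by rw [hZdef] at hZ2; exact hZ2) (fun y hy => (by
      rw [hZdef] at hZpos; exact (hZpos y hy).ne'))
  -- differentiability at points
  have hud : ∀ y ∈ Ω, DifferentiableAt ℝ u y :=
    fun y hy => diffAt_of_contDiffOn hΩ (hu.of_le (by norm_num)) hy
  have hVd : ∀ y ∈ Ω, DifferentiableAt ℝ V y :=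
    fun y hy => diffAt_of_contDiffOn hΩ (hV3.of_le (by norm_num)) hy
  have hWd : ∀ y ∈ Ω, DifferentiableAt ℝ W y :=
    fun y hy => diffAt_of_contDiffOn hΩ (hW2.of_le (by norm_num)) hy
  have hfd : ∀ y ∈ Ω, DifferentiableAt ℝ f (u y) :=
    fun y hy => (hf.contDiffAt (isOpen_Ioi.mem_nhds (hupos y hy))).differentiableAt (by norm_num)
  have hf1 : ContDiffOn ℝ 1 (deriv f) (Set.Ioi 0) := hf.deriv_of_isOpen isOpen_Ioi (by norm_num)
  have hf1d : ∀ y ∈ Ω, DifferentiableAt ℝ (deriv f) (u y) :=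
    fun y hy => (hf1.contDiffAt (isOpen_Ioi.mem_nhds (hupos y hy))).differentiableAt one_ne_zero
  -- Equation 1: lap V = -(f'(u) V)
  have lapV : ∀ y ∈ Ω, lap V y = -(deriv f (u y) * V y) := by
    intro y hy
    rw [hVdef, lap_pd_comm hΩ hu3 ν hy]
    have e : lap u =ᶠ[nhds y] fun z => -(f (u z)) := by
      filter_upwards [hΩ.mem_nhds hy] with z hz
      have := heq z hz; linarith
    rw [pd_congr ν e, pd_neg (g := fun z => f (u z)) ν,
      pd_comp ν (hfd y hy) (hud y hy)]
  -- Equation 2: lap W = -(f''(u) V^2 + f'(u) W)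
  have lapW : ∀ y ∈ Ω, lap W y
      = -(deriv (deriv f) (u y) * V y * V y + deriv f (u y) * W y) := by
    intro y hy
    rw [hWdef, lap_pd_comm hΩ hV3 ν hy]
    have e : lap V =ᶠ[nhds y] fun z => -(deriv f (u z) * V z) := by
      filter_upwards [hΩ.mem_nhds hy] with z hz
      exact lapV z hz
    have dg : DifferentiableAt ℝ (fun z => deriv f (u z)) y := (hf1d y hy).comp y (hud y hy)
    rw [pd_congr ν e, pd_neg (g := fun z => deriv f (u z) * V z) ν,
      pd_mul ν dg (hVd y hy), pd_comp ν (hf1d y hy) (hud y hy)]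
  -- Equation 3: lap Z = -(f'(u) Z) + 2 W
  have hpdV1 : ∀ i : Fin (n+1), ContDiffOn ℝ 1 (pd i V) Ω := by
    intro i
    have := pd_contDiffOn (k := 2) hΩ (by exact_mod_cast hV3) i
    exact this.of_le (by norm_num)
  have hpdVd : ∀ (i : Fin (n+1)), ∀ y ∈ Ω, DifferentiableAt ℝ (pd i V) y :=
    fun i y hy => diffAt_of_contDiffOn hΩ (hpdV1 i) hy
  have hcd : ∀ (y : EuclideanSpace ℝ (Fin (n+1))),
      DifferentiableAt ℝ (fun z : EuclideanSpace ℝ (Fin (n+1)) => 1 + z ν) y :=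
    fun y => (hasFDerivAt_oneAddCoord ν y).differentiableAt
  have pdZ : ∀ (i : Fin (n+1)), ∀ y ∈ Ω, pd i Z y
      = (if i = ν then 1 else 0) * V y + (1 + y ν) * pd i V y := by
    intro i y hy
    rw [hZdef, pd_mul i (hcd y) (hVd y hy), pd_one_add_coord]
  have lapZ : ∀ y ∈ Ω, lap Z y = -(deriv f (u y) * Z y) + 2 * W y := by
    intro y hy
    have key : ∀ i : Fin (n+1), pd i (pd i Z) y
        = (if i = ν then 2 * pd i V y else 0) + (1 + y ν) * pd i (pd i V) y := by
      intro i
      have e : pd i Z =ᶠ[nhds y]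
          fun z => (if i = ν then 1 else 0) * V z + (1 + z ν) * pd i V z := by
        filter_upwards [hΩ.mem_nhds hy] with z hz
        exact pdZ i z hz
      have d1 : DifferentiableAt ℝ (fun z => (if i = ν then 1 else 0) * V z) y :=
        (hVd y hy).const_mul _
      have d2 : DifferentiableAt ℝ (fun z : EuclideanSpace ℝ (Fin (n+1)) =>
          (1 + z ν) * pd i V z) y := (hcd y).mul (hpdVd i y hy)
      rw [pd_congr i e, pd_add i d1 d2, pd_const_mul i _ (hVd y hy),
        pd_mul i (hcd y) (hpdVd i y hy), pd_one_add_coord]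
      by_cases h : i = ν <;> simp [h] <;> ring
    have : lap Z y = 2 * pd ν V y + (1 + y ν) * lap V y := by
      unfold lap
      rw [Finset.sum_congr rfl fun i _ => key i, Finset.sum_add_distrib, ← Finset.mul_sum,
        Finset.sum_ite_eq' Finset.univ ν (fun i => 2 * pd i V y)]
      simp
    rw [this, lapV y hy, ← hWdef, hZdef]
    ring
  -- final assembly at x
  have hZx : 0 < Z x := hZpos x hx
  have hne : Z x ≠ 0 := hZx.ne'
  have hXiZ : ∀ y, Xi y = W y / Z y := fun y => rfl
  have e : ∀ y ∈ Ω, W y = Xi y * Z y := by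
    intro y hy
    rw [hXiZ y, div_mul_cancel₀ _ (hZpos y hy).ne']
  have lw := lap_congr_on hΩ hx e
  rw [lap_mul hΩ hXi2 hZ2 hx] at lw
  set S := ∑ i, pd i Xi x * pd i Z x with hS
  have hW_x := lapW x hx
  have hZ_x := lapZ x hx
  have hWx : W x = Xi x * Z x := e x hx
  have h2 : -lap Xi x * Z x
      = deriv (deriv f) (u x) * V x * V x + 2 * S + 2 * (Xi x)^2 * Z x := by
    have c1 : -lap Xi x * Z x = -(lap W x) + 2 * S + Xi x * lap Z x := by
      rw [lw]; ring
    rw [c1, hW_x, hZ_x, hWx]; ring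
  have h3 : -lap Xi x
      = (deriv (deriv f) (u x) * V x * V x + 2 * S + 2 * (Xi x)^2 * Z x) / Z x := by
    rw [eq_div_iff hne]; exact h2
  -- rewrite the goal
  rw [show W x / ((1 + x ν) * V x) = Xi x from rfl,
    show ((1 + x ν) * V x) = Z x from rfl, real_inner_smul_left, inner_grads Z Xi x,
    show (∑ i, pd i Z x * pd i Xi x) = S from
      Finset.sum_congr rfl fun i _ => mul_comm _ _]
  rw [ge_iff_le, h3]
  have hrw : (deriv (deriv f) (u x) * V x * V x + 2 * S + 2 * (Xi x)^2 * Z x) / Z x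
      = deriv (deriv f) (u x) * V x * V x / Z x + 2 * ((Z x)⁻¹ * S) + 2 * (Xi x)^2 := by
    field_simp
  rw [hrw]
  have hF2 : 0 ≤ deriv (deriv f) (u x) := hconv (u x) (hupos x hx)
  have hpos : 0 ≤ deriv (deriv f) (u x) * V x * V x / Z x := by
    have hVx : 0 < V x := hv x hx
    positivity
  linarith
end

section
/- Suppose n ≥ 3 and p ≥ (n+2)/(n-2), and let U : [0,∞) → (0,∞) be a radial positive classical solution profile of -Δu = u^p on ℝⁿ with U' < 0 on (0,∞). Define u_j(x) := j^{2/(p-1)} U(j|x|). Then sup_{B₁} u_j = U(0) j^{2/(p-1)}, and for every σ ∈ (0,1) and every j > 1/σ, sup_{B_σ} |∇u_j|/u_j ≥ c (sup_{B₁} u_j)^{(p-1)/2} where c = (|U'(1)|/U(1)) U(0)^{(1-p)/2} > 0. -/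
open Metric MeasureTheory Set

/-- Optimality of the logarithmic gradient estimate: for a radial decreasing positive
solution profile `U` of the Lane-Emden equation with `n ≥ 3`, `p ≥ (n+2)/(n-2)`, the
rescalings `u_j(x) = j^{2/(p-1)} U(j|x|)` satisfy `sup_{B₁} u_j = U(0) j^{2/(p-1)}` and,
for `σ ∈ (0,1)` and `j > 1/σ`,
`sup_{B_σ} |∇u_j|/u_j ≥ c (sup_{B₁} u_j)^{(p-1)/2}` with
`c = (|U'(1)|/U(1)) U(0)^{(1-p)/2}`. -/
theorem stmt9 {n : ℕ} (hn : 3 ≤ n) (p : ℝ) (hp : ((n : ℝ) + 2) / ((n : ℝ) - 2) ≤ p)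
    (U : ℝ → ℝ)
    (hUpos : ∀ r : ℝ, 0 ≤ r → 0 < U r)
    (hUdec : ∀ r : ℝ, 0 < r → deriv U r < 0)
    (hsmooth : ContDiff ℝ 2 (fun x : EuclideanSpace ℝ (Fin n) => U ‖x‖))
    (heq : ∀ x : EuclideanSpace ℝ (Fin n),
      -lap (fun y => U ‖y‖) x = (U ‖x‖) ^ p)
    (j : ℕ) (σ : ℝ) (hσ : σ ∈ Set.Ioo (0 : ℝ) 1) (hj : 1 / σ < (j : ℝ)) :
    sSup ((fun x : EuclideanSpace ℝ (Fin n) => (j : ℝ) ^ (2 / (p - 1)) * U ((j : ℝ) * ‖x‖)) ''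
        Metric.ball 0 1) = U 0 * (j : ℝ) ^ (2 / (p - 1)) ∧
    (|deriv U 1| / U 1) * (U 0) ^ ((1 - p) / 2) *
        (sSup ((fun x : EuclideanSpace ℝ (Fin n) =>
          (j : ℝ) ^ (2 / (p - 1)) * U ((j : ℝ) * ‖x‖)) '' Metric.ball 0 1)) ^ ((p - 1) / 2)
      ≤ sSup ((fun x : EuclideanSpace ℝ (Fin n) =>
          ‖gradient (fun y => (j : ℝ) ^ (2 / (p - 1)) * U ((j : ℝ) * ‖y‖)) x‖ /
            ((j : ℝ) ^ (2 / (p - 1)) * U ((j : ℝ) * ‖x‖))) '' Metric.ball 0 σ) := by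
  have hp1 : 1 < p := by
    refine lt_of_lt_of_le ?_ hp
    have h2 : (0:ℝ) < (n:ℝ) - 2 := by
      have : (3:ℝ) ≤ (n:ℝ) := by exact_mod_cast hn
      linarith
    rw [lt_div_iff₀ h2]; linarith
  have jpos : (0:ℝ) < (j:ℝ) := by
    have h1σ : (1:ℝ) < 1/σ := by
      rw [lt_div_iff₀ hσ.1]; nlinarith [hσ.1, hσ.2]
    linarith
  set E := EuclideanSpace ℝ (Fin n)
  set α := 2 / (p - 1) with hα
  have jαpos : (0:ℝ) < (j:ℝ) ^ α := Real.rpow_pos_of_pos jpos _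
  set e : E := EuclideanSpace.single (⟨0, by omega⟩ : Fin n) (1:ℝ) with he
  have hne : ‖e‖ = 1 := by rw [he, EuclideanSpace.norm_single]; norm_num
  set f : E → ℝ := fun x => U ‖x‖ with hf
  -- monotonicity of U on [0,∞)
  have hUcont : ContinuousOn U (Ici 0) := by
    have h1 : ContinuousOn (fun r : ℝ => f (r • e)) (Ici 0) :=
      (hsmooth.continuous.comp (by continuity)).continuousOn
    exact h1.congr fun r hr => by
      simp [hf, norm_smul, abs_of_nonneg (mem_Ici.mp hr), hne]
  have hanti : StrictAntiOn U (Ici 0) :=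
    strictAntiOn_of_deriv_neg (convex_Ici 0) hUcont
      (fun r hr => hUdec r (by rwa [interior_Ici] at hr))
  have hUle : ∀ r : ℝ, 0 ≤ r → U r ≤ U 0 := by
    intro r hr
    rcases eq_or_lt_of_le hr with h | h
    · rw [← h]
    · exact (hanti (mem_Ici.mpr le_rfl) (mem_Ici.mpr (le_of_lt h)) h).le
  -- Part 1
  have hsup : sSup ((fun x : E => (j : ℝ) ^ α * U ((j : ℝ) * ‖x‖)) ''
      Metric.ball 0 1) = U 0 * (j : ℝ) ^ α := by
    apply IsGreatest.csSup_eq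
    constructor
    · exact ⟨0, mem_ball_self one_pos, by simp [mul_comm]⟩
    · rintro y ⟨x, hx, rfl⟩
      rw [mul_comm (U 0)]
      exact mul_le_mul_of_nonneg_left (hUle _ (by positivity)) (Real.rpow_nonneg jpos.le _)
  refine ⟨hsup, ?_⟩
  rw [hsup]
  -- Part 2
  set G : E → ℝ := fun y => (j:ℝ) ^ α * U ((j:ℝ) * ‖y‖) with hG
  have hGeq : G = fun y => (j:ℝ) ^ α * f ((j:ℝ) • y) := by
    funext y; simp [hG, hf, norm_smul, abs_of_nonneg jpos.le]
  have hGC : ContDiff ℝ 2 G := by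
    rw [hGeq]
    exact contDiff_const.mul (hsmooth.comp (contDiff_const_smul (j:ℝ)))
  have hGpos : ∀ y : E, 0 < G y := fun y =>
    mul_pos jαpos (hUpos _ (by positivity))
  have hfd : Continuous (fderiv ℝ G) := hGC.continuous_fderiv (by norm_num)
  have hgradc : Continuous (fun y : E => gradient G y) := by
    simp only [gradient]
    exact (LinearIsometryEquiv.continuous _).comp hfd
  set F : E → ℝ := fun x => ‖gradient G x‖ / ((j:ℝ) ^ α * U ((j:ℝ) * ‖x‖)) with hF
  have hFc : Continuous F := (hgradc.norm).div hGC.continuous (fun y => (hGpos y).ne')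
  have hbdd : BddAbove (F '' ball (0:E) σ) := by
    refine BddAbove.mono (Set.image_mono ball_subset_closedBall) ?_
    exact (isCompact_closedBall (0:E) σ).bddAbove_image hFc.continuousOn
  set x₀ : E := ((j:ℝ)⁻¹) • e with hx₀
  have hnx₀ : ‖x₀‖ = (j:ℝ)⁻¹ := by
    rw [hx₀, norm_smul, hne, mul_one, Real.norm_eq_abs, abs_of_nonneg (by positivity)]
  have hx₀mem : x₀ ∈ ball (0:E) σ := by
    rw [mem_ball_zero_iff, hnx₀]
    rw [one_div] at hj
    exact (inv_lt_comm₀ hσ.1 jpos).mp hj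
  have hjx₀ : (j:ℝ) * ‖x₀‖ = 1 := by rw [hnx₀]; field_simp
  have hGdiff : DifferentiableAt ℝ G x₀ := (hGC.differentiable (by norm_num)).differentiableAt
  set D := fderiv ℝ G x₀ with hD
  have hGD : HasFDerivAt G D x₀ := hGdiff.hasFDerivAt
  have hline : HasDerivAt (fun r : ℝ => r • e) e ((j:ℝ)⁻¹) := by
    simpa using (hasDerivAt_id ((j:ℝ)⁻¹)).smul_const e
  have h1 : HasDerivAt (fun r : ℝ => G (r • e)) (D e) ((j:ℝ)⁻¹) :=
    HasFDerivAt.comp_hasDerivAt (x := (j:ℝ)⁻¹) (l := G) (l' := D) (f := fun r : ℝ => r • e) hGD hline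
  have hU1 : DifferentiableAt ℝ U 1 :=
    differentiableAt_of_deriv_ne_zero (hUdec 1 one_pos).ne
  have h2a : HasDerivAt (fun r : ℝ => U ((j:ℝ) * r)) (deriv U 1 * (j:ℝ)) ((j:ℝ)⁻¹) := by
    have hU1' : HasDerivAt U (deriv U 1) ((j:ℝ) * id ((j:ℝ)⁻¹)) := by
      simpa [mul_inv_cancel₀ jpos.ne'] using hU1.hasDerivAt
    have h := hU1'.comp ((j:ℝ)⁻¹) ((hasDerivAt_id' ((j:ℝ)⁻¹)).const_mul (j:ℝ))
    rw [mul_one] at h; exact h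
  have h2 : HasDerivAt (fun r : ℝ => (j:ℝ)^α * U ((j:ℝ) * r))
      ((j:ℝ)^α * (deriv U 1 * (j:ℝ))) ((j:ℝ)⁻¹) := h2a.const_mul _
  have hEq : (fun r : ℝ => G (r • e)) =ᶠ[nhds ((j:ℝ)⁻¹)]
      (fun r : ℝ => (j:ℝ)^α * U ((j:ℝ) * r)) := by
    filter_upwards [Ioi_mem_nhds (inv_pos.mpr jpos)] with r hr
    simp [hG, norm_smul, abs_of_pos (show (0:ℝ) < r from hr), hne]
  have h1' : HasDerivAt (fun r : ℝ => (j:ℝ)^α * U ((j:ℝ) * r)) (D e) ((j:ℝ)⁻¹) :=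
    h1.congr_of_eventuallyEq hEq.symm
  have hDe : D e = (j:ℝ)^α * (deriv U 1 * (j:ℝ)) := h1'.unique h2
  have hinner : (inner ℝ (gradient G x₀) e : ℝ) = D e := by
    simp [gradient, InnerProductSpace.toDual_symm_apply, hD]
  have hlow : (j:ℝ)^α * (|deriv U 1| * (j:ℝ)) ≤ ‖gradient G x₀‖ := by
    have h3 : |D e| ≤ ‖gradient G x₀‖ := by
      rw [← hinner]
      calc |(inner ℝ (gradient G x₀) e : ℝ)| ≤ ‖gradient G x₀‖ * ‖e‖ := abs_real_inner_le_norm _ _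
        _ = ‖gradient G x₀‖ := by rw [hne, mul_one]
    calc (j:ℝ)^α * (|deriv U 1| * (j:ℝ)) = |D e| := by
          rw [hDe, abs_mul, abs_mul, abs_of_nonneg jαpos.le, abs_of_nonneg jpos.le]
      _ ≤ ‖gradient G x₀‖ := h3
  have hU0 : (0:ℝ) < U 0 := hUpos 0 le_rfl
  have hU1pos : (0:ℝ) < U 1 := hUpos 1 zero_le_one
  have e1 : (U 0 * (j:ℝ)^α) ^ ((p-1)/2) = U 0 ^ ((p-1)/2) * (j:ℝ) := by
    rw [Real.mul_rpow hU0.le jαpos.le, ← Real.rpow_mul jpos.le]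
    have hone : α * ((p-1)/2) = 1 := by
      rw [hα]; field_simp
      exact div_self (by nlinarith)
    rw [hone, Real.rpow_one]
  have e2 : U 0 ^ ((1-p)/2) * U 0 ^ ((p-1)/2) = 1 := by
    rw [← Real.rpow_add hU0]
    have : (1-p)/2 + (p-1)/2 = 0 := by ring
    rw [this, Real.rpow_zero]
  have hrw : (|deriv U 1| / U 1) * (U 0) ^ ((1 - p) / 2) *
      (U 0 * (j : ℝ) ^ α) ^ ((p - 1) / 2) = (|deriv U 1| / U 1) * (j:ℝ) := by
    rw [e1]
    calc |deriv U 1| / U 1 * U 0 ^ ((1 - p) / 2) * (U 0 ^ ((p - 1) / 2) * (j:ℝ))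
        = |deriv U 1| / U 1 * (U 0 ^ ((1 - p) / 2) * U 0 ^ ((p - 1) / 2)) * (j:ℝ) := by ring
      _ = |deriv U 1| / U 1 * (j:ℝ) := by rw [e2]; ring
  rw [hrw]
  have hval : (|deriv U 1| / U 1) * (j:ℝ) ≤ F x₀ := by
    rw [hF]
    simp only [hjx₀]
    rw [le_div_iff₀ (by positivity)]
    calc |deriv U 1| / U 1 * (j:ℝ) * ((j:ℝ)^α * U 1)
        = (j:ℝ)^α * (|deriv U 1| * (j:ℝ)) := by field_simp
      _ ≤ ‖gradient G x₀‖ := hlow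
  exact hval.trans (le_csSup hbdd ⟨x₀, hx₀mem, rfl⟩)
end

section
/- Let n ≥ 1, c₀, c₁ > 0, and let λ₁(R) denote the first Dirichlet eigenvalue of -Δ on the ball B_R ⊆ ℝⁿ. Choose R₀ > 0 with λ₁(2R₀) = c₀/2. Then there is a constant C = C(c₀, c₁, n) such that every positive C² solution u of -Δu = f(u) on the closed ball B_{2R₀}(x₀), where f satisfies f(s) ≥ c₀ s - c₁ for all s > 0, satisfies ∫_{B_{R₀}(x₀)} u(x) dx ≤ C. -/
open Metric MeasureTheory Set

variable {m : ℕ}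

noncomputable def Phi (i : Fin (m+1)) (z : ℝ × (Fin m → ℝ)) : EuclideanSpace ℝ (Fin (m+1)) :=
  (MeasurableEquiv.toLp 2 (Fin (m+1) → ℝ))
    ((MeasurableEquiv.piFinSuccAbove (fun _ : Fin (m+1) => ℝ) i).symm z)

lemma Phi_apply_same (i : Fin (m+1)) (t : ℝ) (y : Fin m → ℝ) :
    Phi i (t, y) i = t := by
  simp [Phi, MeasurableEquiv.coe_toLp, MeasurableEquiv.piFinSuccAbove_symm_apply,
    Fin.insertNthEquiv]

lemma Phi_apply_succAbove (i : Fin (m+1)) (t : ℝ) (y : Fin m → ℝ) (j : Fin m) :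
    Phi i (t, y) (i.succAbove j) = y j := by
  simp [Phi, MeasurableEquiv.coe_toLp, MeasurableEquiv.piFinSuccAbove_symm_apply,
    Fin.insertNthEquiv]

lemma Phi_line (i : Fin (m+1)) (t s : ℝ) (y : Fin m → ℝ) :
    Phi i (s, y) = Phi i (t, y) + (s - t) • EuclideanSpace.single i (1:ℝ) := by
  ext k
  rcases eq_or_ne k i with rfl | hk
  · simp [Phi_apply_same, EuclideanSpace.single_apply]
  · obtain ⟨j, hj⟩ := Fin.exists_succAbove_eq hk
    rw [← hj]
    have : i.succAbove j ≠ i := Fin.succAbove_ne i j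
    simp [Phi_apply_succAbove, EuclideanSpace.single_apply, this]

lemma Phi_dist_sq (i : Fin (m+1)) (c : EuclideanSpace ℝ (Fin (m+1))) (t : ℝ) (y : Fin m → ℝ) :
    dist (Phi i (t, y)) c = Real.sqrt ((t - c i)^2 + ∑ j, (y j - c (i.succAbove j))^2) := by
  rw [EuclideanSpace.dist_eq]
  simp only [Real.dist_eq, sq_abs]
  congr 1
  rw [Fin.sum_univ_succAbove (fun k => (Phi i (t,y) k - c k)^2) i]
  simp [Phi_apply_same, Phi_apply_succAbove]

lemma measurePreserving_Phi (i : Fin (m+1)) :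
    MeasurePreserving (Phi i) (volume.prod volume) volume := by
  exact ((EuclideanSpace.volume_preserving_symm_measurableEquiv_toLp (Fin (m+1))).symm).comp
    ((volume_preserving_piFinSuccAbove (fun _ : Fin (m+1) => ℝ) i).symm _)

lemma key_div (c : EuclideanSpace ℝ (Fin (m+1))) (r : ℝ) (hr : 0 < r)
    (G g : EuclideanSpace ℝ (Fin (m+1)) → ℝ) (i : Fin (m+1))
    (hGc : ContinuousOn G (closedBall c r))
    (hG0 : ∀ x ∈ sphere c r, G x = 0)
    (hgc : ContinuousOn g (closedBall c r))
    (hder : ∀ x ∈ ball c r,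
      HasDerivAt (fun t : ℝ => G (x + t • EuclideanSpace.single i (1:ℝ))) (g x) 0) :
    ∫ x in ball c r, g x = 0 := by
  have hball : MeasurableSet (ball c r) := measurableSet_ball
  have hint : Integrable ((ball c r).indicator g) := by
    rw [integrable_indicator_iff hball]
    exact (hgc.integrableOn_compact (isCompact_closedBall c r)).mono_set ball_subset_closedBall
  have hemb : MeasurableEmbedding (Phi (m := m) i) :=
    (((MeasurableEquiv.piFinSuccAbove (fun _ : Fin (m+1) => ℝ) i).symm).trans
      (MeasurableEquiv.toLp 2 (Fin (m+1) → ℝ))).measurableEmbedding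
  have mp := measurePreserving_Phi (m := m) i
  have inner : ∀ y : Fin m → ℝ, (∫ t : ℝ, (ball c r).indicator g (Phi i (t, y))) = 0 := by
    intro y
    set d : ℝ := ∑ j, (y j - c (i.succAbove j))^2 with hd
    have hd0 : 0 ≤ d := Finset.sum_nonneg fun j _ => sq_nonneg _
    have hmem : ∀ t : ℝ, Phi i (t, y) ∈ ball c r ↔ (t - c i)^2 < r^2 - d := by
      intro t
      rw [mem_ball, Phi_dist_sq, Real.sqrt_lt' hr, ← hd, lt_sub_iff_add_lt]
    by_cases hdr : r^2 - d ≤ 0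
    · have : ∀ t : ℝ, (ball c r).indicator g (Phi i (t, y)) = 0 := by
        intro t
        apply indicator_of_notMem
        rw [hmem]
        exact not_lt.2 (le_trans hdr (sq_nonneg _))
      simp [this]
    · push_neg at hdr
      set w : ℝ := Real.sqrt (r^2 - d) with hwdef
      have hw : 0 < w := Real.sqrt_pos.2 hdr
      have hw2 : w^2 = r^2 - d := Real.sq_sqrt hdr.le
      have hset : ∀ t : ℝ, Phi i (t, y) ∈ ball c r ↔ t ∈ Ioo (c i - w) (c i + w) := by
        intro t
        rw [hmem, ← hw2, mem_Ioo]
        constructor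
        · intro h
          have := abs_lt_of_sq_lt_sq' h hw.le
          constructor <;> linarith [this.1, this.2]
        · intro h
          exact sq_lt_sq' (by linarith [h.1]) (by linarith [h.2])
      have hIcc : ∀ t ∈ Icc (c i - w) (c i + w), Phi i (t, y) ∈ closedBall c r := by
        intro t ht
        rw [mem_closedBall, Phi_dist_sq, ← hd]
        have h1 : (t - c i)^2 ≤ w^2 := sq_le_sq' (by linarith [ht.1]) (by linarith [ht.2])
        calc Real.sqrt ((t - c i)^2 + d) ≤ Real.sqrt (r^2) := by
              apply Real.sqrt_le_sqrt; rw [hw2] at h1; linarith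
          _ = r := Real.sqrt_sq hr.le
      have hsphere : ∀ t : ℝ, (t - c i)^2 = w^2 → Phi i (t, y) ∈ sphere c r := by
        intro t ht
        rw [mem_sphere, Phi_dist_sq, ← hd, ht, hw2]
        have : r^2 - d + d = r^2 := by ring
        rw [this, Real.sqrt_sq hr.le]
      have hline : Continuous (fun t : ℝ => Phi i (t, y)) := by
        have : (fun t : ℝ => Phi i (t, y))
            = fun t : ℝ => Phi i (0, y) + (t - 0) • EuclideanSpace.single i (1:ℝ) := by
          funext t; exact Phi_line i 0 t y
        rw [this]
        exact continuous_const.add ((continuous_id.sub continuous_const).smul continuous_const)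
      set a : ℝ := c i - w
      set b : ℝ := c i + w
      have hab : a ≤ b := by simp only [a, b]; linarith
      have hF : (fun t : ℝ => (ball c r).indicator g (Phi i (t, y)))
          = (Ioo a b).indicator (fun t => g (Phi i (t, y))) := by
        funext t
        by_cases h : t ∈ Ioo a b
        · rw [indicator_of_mem h, indicator_of_mem ((hset t).2 h)]
        · rw [indicator_of_notMem h, indicator_of_notMem (fun hc => h ((hset t).1 hc))]
      rw [hF, integral_indicator measurableSet_Ioo, ← MeasureTheory.integral_Ioc_eq_integral_Ioo,
        ← intervalIntegral.integral_of_le hab]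
      have hcont : ContinuousOn (fun t : ℝ => G (Phi i (t, y))) (Icc a b) :=
        hGc.comp hline.continuousOn (fun t ht => hIcc t ht)
      have hderiv : ∀ t ∈ Ioo a b,
          HasDerivWithinAt (fun s : ℝ => G (Phi i (s, y))) (g (Phi i (t, y))) (Ioi t) t := by
        intro t ht
        have hmemb : Phi i (t, y) ∈ ball c r := (hset t).2 ht
        have h1 := hder _ hmemb
        have h2 : HasDerivAt (fun s : ℝ => s - t) 1 t := (hasDerivAt_id t).sub_const t
        have h1' : HasDerivAt (fun s : ℝ => G (Phi i (t, y) + s • EuclideanSpace.single i (1:ℝ)))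
            (g (Phi i (t, y))) (t - t) := by rw [sub_self]; exact h1
        have h3 := HasDerivAt.comp_sub_const t t h1'
        have h4 : (fun s : ℝ => G (Phi i (t, y) + (s - t) • EuclideanSpace.single i (1:ℝ)))
            = fun s : ℝ => G (Phi i (s, y)) := by
          funext s; rw [← Phi_line]
        rw [h4] at h3
        exact h3.hasDerivWithinAt
      have hii : IntervalIntegrable (fun t : ℝ => g (Phi i (t, y))) volume a b := by
        apply ContinuousOn.intervalIntegrable
        rw [uIcc_of_le hab]
        exact hgc.comp hline.continuousOn (fun t ht => hIcc t ht)
      rw [intervalIntegral.integral_eq_sub_of_hasDeriv_right_of_le hab hcont hderiv hii]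
      have ha : G (Phi i (a, y)) = 0 := hG0 _ (hsphere a (by simp only [a]; ring))
      have hb : G (Phi i (b, y)) = 0 := hG0 _ (hsphere b (by simp only [b]; ring))
      rw [ha, hb, sub_zero]
  calc ∫ x in ball c r, g x = ∫ x, (ball c r).indicator g x := (integral_indicator hball).symm
    _ = ∫ z, (ball c r).indicator g (Phi i z) ∂(volume.prod volume) :=
        (mp.integral_comp hemb _).symm
    _ = ∫ y, ∫ t, (ball c r).indicator g (Phi i (t, y)) ∂volume ∂volume :=
        integral_prod_symm _ ((mp.integrable_comp_emb hemb).mpr hint)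
    _ = 0 := by simp [inner]

section helpers

lemma fderiv_shift {E₁ F₁ : Type*} [NormedAddCommGroup E₁] [NormedSpace ℝ E₁]
    [NormedAddCommGroup F₁] [NormedSpace ℝ F₁] (v : E₁ → F₁) (x₀ x : E₁) :
    fderiv ℝ (fun y => v (y - x₀)) x = fderiv ℝ v (x - x₀) := by
  by_cases h : DifferentiableAt ℝ v (x - x₀)
  · have h1 : HasFDerivAt (fun y => v (y - x₀)) (fderiv ℝ v (x - x₀)) x := by
    
      have := h.hasFDerivAt.comp x ((hasFDerivAt_id x).sub_const x₀)
      simpa [Function.comp_def] using this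
    exact h1.fderiv
  · have h2 : ¬ DifferentiableAt ℝ (fun y => v (y - x₀)) x := by
      intro hc
      apply h
      have hg : DifferentiableAt ℝ (fun y => v (y - x₀)) (x - x₀ + x₀) := by
        rw [sub_add_cancel]; exact hc
      have h3 := hg.comp (x - x₀) (differentiableAt_id.add_const x₀)
      simpa [Function.comp_def] using h3
    rw [fderiv_zero_of_not_differentiableAt h2, fderiv_zero_of_not_differentiableAt h]

variable {n : ℕ}

lemma pd_shift (i : Fin n) (v : EuclideanSpace ℝ (Fin n) → ℝ) (x₀ : EuclideanSpace ℝ (Fin n)) :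
    pd i (fun y => v (y - x₀)) = fun x => pd i v (x - x₀) := by
  funext x; unfold pd; rw [fderiv_shift]

noncomputable def pdW (s : Set (EuclideanSpace ℝ (Fin n))) (i : Fin n)
    (v : EuclideanSpace ℝ (Fin n) → ℝ) : EuclideanSpace ℝ (Fin n) → ℝ :=
  fun x => fderivWithin ℝ v s x (EuclideanSpace.single i 1)

lemma pdW_contDiffOn {s : Set (EuclideanSpace ℝ (Fin n))} (hs : UniqueDiffOn ℝ s)
    {v : EuclideanSpace ℝ (Fin n) → ℝ} (hv : ContDiffOn ℝ 2 v s) (i : Fin n) :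
    ContDiffOn ℝ 1 (pdW s i v) s := by
  have h1 : ContDiffOn ℝ 1 (fderivWithin ℝ v s) s := hv.fderivWithin hs (by norm_num)
  exact h1.clm_apply contDiffOn_const

lemma pdW_continuousOn {s : Set (EuclideanSpace ℝ (Fin n))} (hs : UniqueDiffOn ℝ s)
    {v : EuclideanSpace ℝ (Fin n) → ℝ} (hv : ContDiffOn ℝ 2 v s) (i : Fin n) :
    ContinuousOn (pdW s i v) s :=
  (pdW_contDiffOn hs hv i).continuousOn

lemma pdW2_continuousOn {s : Set (EuclideanSpace ℝ (Fin n))} (hs : UniqueDiffOn ℝ s)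
    {v : EuclideanSpace ℝ (Fin n) → ℝ} (hv : ContDiffOn ℝ 2 v s) (i : Fin n) :
    ContinuousOn (pdW s i (pdW s i v)) s := by
  have h1 : ContinuousOn (fderivWithin ℝ (pdW s i v) s) s :=
    (pdW_contDiffOn hs hv i).continuousOn_fderivWithin hs (by norm_num)
  exact h1.clm_apply continuousOn_const

lemma pdW_eq_pd {s : Set (EuclideanSpace ℝ (Fin n))} {x : EuclideanSpace ℝ (Fin n)}
    (hx : s ∈ nhds x) (i : Fin n) (v : EuclideanSpace ℝ (Fin n) → ℝ) :
    pdW s i v x = pd i v x := by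
  unfold pdW pd; rw [fderivWithin_of_mem_nhds hx]

lemma pdW2_eq_pd2 {s : Set (EuclideanSpace ℝ (Fin n))} {x : EuclideanSpace ℝ (Fin n)}
    {t : Set (EuclideanSpace ℝ (Fin n))} (ht : IsOpen t) (hxt : x ∈ t) (hts : t ⊆ s)
    (i : Fin n) (v : EuclideanSpace ℝ (Fin n) → ℝ) :
    pdW s i (pdW s i v) x = pd i (pd i v) x := by
  have hnx : s ∈ nhds x := Filter.mem_of_superset (ht.mem_nhds hxt) hts
  have heq : pdW s i v =ᶠ[nhds x] pd i v := by
    filter_upwards [ht.mem_nhds hxt] with y hy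
    have hny : s ∈ nhds y := Filter.mem_of_superset (ht.mem_nhds hy) hts
    exact pdW_eq_pd hny i v
  show fderivWithin ℝ (pdW s i v) s x (EuclideanSpace.single i 1)
      = fderiv ℝ (pd i v) x (EuclideanSpace.single i 1)
  rw [fderivWithin_of_mem_nhds hnx, heq.fderiv_eq]

lemma myLineDeriv {x : EuclideanSpace ℝ (Fin n)} (e : EuclideanSpace ℝ (Fin n))
    {h : EuclideanSpace ℝ (Fin n) → ℝ} (hd : DifferentiableAt ℝ h x) :
    HasDerivAt (fun t : ℝ => h (x + t • e)) (fderiv ℝ h x e) 0 := by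
  have hℓ : HasDerivAt (fun t : ℝ => x + t • e) e 0 := by
    simpa using ((hasDerivAt_id (0:ℝ)).smul_const e).const_add x
  have h1 : HasFDerivAt h (fderiv ℝ h x) (x + (0:ℝ) • e) := by
    simpa using hd.hasFDerivAt
  have h2 := h1.comp_hasDerivAt 0 hℓ
  simpa [Function.comp_def] using h2

end helpers


set_option maxHeartbeats 1000000 in
/-- Local integral bound: if `λ₁(B_{2R₀}) = c₀/2` (witnessed by a positive principal
eigenfunction `φ` with eigenvalue `c₀/2`) then every positive C² solution of `-Δu = f(u)` on
a closed ball of radius `2R₀`, with `f(s) ≥ c₀ s - c₁` for `s > 0`, satisfies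
`∫_{B_{R₀}(x₀)} u ≤ C` with `C` depending only on `c₀, c₁, n`. -/
theorem stmt11 {n : ℕ} (c₀ c₁ R₀ : ℝ) (hc₀ : 0 < c₀) (hc₁ : 0 < c₁) (hR₀ : 0 < R₀)
    (φ : EuclideanSpace ℝ (Fin n) → ℝ)
    (hφ : ContDiffOn ℝ 2 φ (Metric.closedBall 0 (2 * R₀)))
    (hφpos : ∀ x ∈ Metric.ball (0 : EuclideanSpace ℝ (Fin n)) (2 * R₀), 0 < φ x)
    (hφ0 : ∀ x ∈ Metric.sphere (0 : EuclideanSpace ℝ (Fin n)) (2 * R₀), φ x = 0)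
    (hφeq : ∀ x ∈ Metric.ball (0 : EuclideanSpace ℝ (Fin n)) (2 * R₀),
      -lap φ x = (c₀ / 2) * φ x) :
    ∃ C : ℝ, ∀ (x₀ : EuclideanSpace ℝ (Fin n)) (f : ℝ → ℝ)
      (u : EuclideanSpace ℝ (Fin n) → ℝ),
      (∀ s > (0 : ℝ), c₀ * s - c₁ ≤ f s) →
      ContDiffOn ℝ 2 u (Metric.closedBall x₀ (2 * R₀)) →
      (∀ x ∈ Metric.closedBall x₀ (2 * R₀), 0 < u x) →
      (∀ x ∈ Metric.ball x₀ (2 * R₀), -lap u x = f (u x)) →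
      ∫ x in Metric.ball x₀ R₀, u x ≤ C := by
  have h2R : 0 < 2 * R₀ := by linarith
  obtain _ | m := n
  · -- dimension 0 : the eigenvalue equation is contradictory
    exfalso
    have h0 : (0 : EuclideanSpace ℝ (Fin 0)) ∈ Metric.ball (0 : EuclideanSpace ℝ (Fin 0)) (2*R₀) :=
      mem_ball_self h2R
    have h1 := hφeq 0 h0
    have h2 : lap φ (0 : EuclideanSpace ℝ (Fin 0)) = 0 := by
      unfold lap; simp
    have h3 := hφpos 0 h0
    rw [h2] at h1
    nlinarith
  · -- main case
    set K : Set (EuclideanSpace ℝ (Fin (m+1))) := Metric.closedBall 0 (2*R₀) with hKdef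
    obtain ⟨M₀, hM₀⟩ := (isCompact_closedBall (0:EuclideanSpace ℝ (Fin (m+1))) (2*R₀)).exists_bound_of_continuousOn
      hφ.continuousOn
    have hM₀0 : 0 ≤ M₀ := le_trans (norm_nonneg _) (hM₀ 0 (mem_closedBall_self h2R.le))
    have hφle : ∀ z ∈ K, φ z ≤ M₀ := fun z hz =>
      (le_abs_self _).trans (by rw [← Real.norm_eq_abs]; exact hM₀ z hz)
    have hφnonneg : ∀ z ∈ K, 0 ≤ φ z := by
      intro z hz
      rcases lt_or_eq_of_le (mem_closedBall.1 hz) with h | h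
      · exact (hφpos z (mem_ball.2 h)).le
      · exact (hφ0 z (mem_sphere.2 h)).ge
    set A : ℝ := 3*M₀ + 1 with hAdef
    have hA0 : 0 < A := by linarith
    -- minimum of φ on the inner ball
    have hsubK : Metric.closedBall (0:EuclideanSpace ℝ (Fin (m+1))) R₀ ⊆ Metric.ball (0:EuclideanSpace ℝ (Fin (m+1))) (2*R₀) :=
      closedBall_subset_ball (by linarith)
    obtain ⟨z₀, hz₀S, hz₀min⟩ := (isCompact_closedBall (0:EuclideanSpace ℝ (Fin (m+1))) R₀).exists_isMinOn
      ⟨0, mem_closedBall_self hR₀.le⟩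
      (hφ.continuousOn.mono (hsubK.trans ball_subset_closedBall))
    set δ : ℝ := φ z₀ with hδdef
    have hδ : 0 < δ := hφpos z₀ (hsubK hz₀S)
    set V : ℝ := (volume (Metric.ball (0:EuclideanSpace ℝ (Fin (m+1))) (2*R₀))).toReal with hVdef
    have hV0 : 0 ≤ V := ENNReal.toReal_nonneg
    refine ⟨2*c₁/c₀ * (V * (A*M₀^2)) / δ^3, ?_⟩
    intro x₀ f u hf hu hupos hueq
    set D : Set (EuclideanSpace ℝ (Fin (m+1))) := Metric.closedBall x₀ (2*R₀) with hDdef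
    set Bo : Set (EuclideanSpace ℝ (Fin (m+1))) := Metric.ball x₀ (2*R₀) with hBodef
    have hBoD : Bo ⊆ D := ball_subset_closedBall
    have hDnhds : ∀ x ∈ Bo, D ∈ nhds x := fun x hx =>
      Filter.mem_of_superset (isOpen_ball.mem_nhds hx) hBoD
    have hUD : UniqueDiffOn ℝ D := uniqueDiffOn_convex (convex_closedBall _ _)
      (by rw [interior_closedBall _ (ne_of_gt h2R)]; exact ⟨x₀, mem_ball_self h2R⟩)
    set σ : EuclideanSpace ℝ (Fin (m+1)) → ℝ := fun x => φ (x - x₀) with hσdef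
    have hmemD : ∀ x : EuclideanSpace ℝ (Fin (m+1)), x ∈ D → x - x₀ ∈ K := by
      intro x hx; rw [hKdef, mem_closedBall]; rw [hDdef, mem_closedBall] at hx
      simpa [dist_eq_norm] using hx
    have hmemB : ∀ x : EuclideanSpace ℝ (Fin (m+1)), x ∈ Bo → x - x₀ ∈ Metric.ball (0:EuclideanSpace ℝ (Fin (m+1))) (2*R₀) := by
      intro x hx; rw [mem_ball]; rw [hBodef, mem_ball] at hx
      simpa [dist_eq_norm] using hx
    have hmemS : ∀ x : EuclideanSpace ℝ (Fin (m+1)), x ∈ Metric.sphere x₀ (2*R₀) → x - x₀ ∈ Metric.sphere (0:EuclideanSpace ℝ (Fin (m+1))) (2*R₀) := by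
      intro x hx; rw [mem_sphere]; rw [mem_sphere] at hx
      simpa [dist_eq_norm] using hx
    have hσ : ContDiffOn ℝ 2 σ D :=
      ContDiffOn.comp hφ ((contDiff_id.sub contDiff_const).contDiffOn) (fun x hx => hmemD x hx)
    have hucont : ContinuousOn u D := hu.continuousOn
    have hσcont : ContinuousOn σ D := hσ.continuousOn
    have hσ0 : ∀ x ∈ D, 0 ≤ σ x := fun x hx => hφnonneg _ (hmemD x hx)
    have hσM : ∀ x ∈ D, σ x ≤ M₀ := fun x hx => hφle _ (hmemD x hx)
    set P : Fin (m+1) → EuclideanSpace ℝ (Fin (m+1)) → ℝ := fun i => pdW D i σ with hPdef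
    set Q : Fin (m+1) → EuclideanSpace ℝ (Fin (m+1)) → ℝ := fun i => pdW D i u with hQdef
    set P2 : Fin (m+1) → EuclideanSpace ℝ (Fin (m+1)) → ℝ := fun i => pdW D i (pdW D i σ)
      with hP2def
    set Q2 : Fin (m+1) → EuclideanSpace ℝ (Fin (m+1)) → ℝ := fun i => pdW D i (pdW D i u)
      with hQ2def
    set Fi : Fin (m+1) → EuclideanSpace ℝ (Fin (m+1)) → ℝ := fun i x =>
      u x * ((2*A*σ x - 3*(σ x)^2) * P i x) - (A*(σ x)^2 - (σ x)^3) * Q i x with hFidef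
    set gi : Fin (m+1) → EuclideanSpace ℝ (Fin (m+1)) → ℝ := fun i x =>
      u x * (2*A - 6*σ x) * (P i x)^2 + u x * (2*A*σ x - 3*(σ x)^2) * P2 i x
        - (A*(σ x)^2 - (σ x)^3) * Q2 i x with hgidef
    have hPcont : ∀ i, ContinuousOn (P i) D := fun i => pdW_continuousOn hUD hσ i
    have hQcont : ∀ i, ContinuousOn (Q i) D := fun i => pdW_continuousOn hUD hu i
    have hP2cont : ∀ i, ContinuousOn (P2 i) D := fun i => pdW2_continuousOn hUD hσ i
    have hQ2cont : ∀ i, ContinuousOn (Q2 i) D := fun i => pdW2_continuousOn hUD hu i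
    have hFicont : ∀ i, ContinuousOn (Fi i) D := by
      intro i
      apply ContinuousOn.sub
      · exact hucont.mul (((continuousOn_const.mul hσcont).sub
          (continuousOn_const.mul (hσcont.pow 2))).mul (hPcont i))
      · exact ((continuousOn_const.mul (hσcont.pow 2)).sub (hσcont.pow 3)).mul (hQcont i)
    have hgicont : ∀ i, ContinuousOn (gi i) D := by
      intro i
      apply ContinuousOn.sub
      · apply ContinuousOn.add
        · exact (hucont.mul (continuousOn_const.sub (continuousOn_const.mul hσcont))).mul
            ((hPcont i).pow 2)
        · exact (hucont.mul ((continuousOn_const.mul hσcont).sub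
            (continuousOn_const.mul (hσcont.pow 2)))).mul (hP2cont i)
      · exact ((continuousOn_const.mul (hσcont.pow 2)).sub (hσcont.pow 3)).mul (hQ2cont i)
    have hFi0 : ∀ i, ∀ x ∈ Metric.sphere x₀ (2*R₀), Fi i x = 0 := by
      intro i x hxS
      have hσx : σ x = 0 := by
        show φ (x - x₀) = 0
        exact hφ0 _ (hmemS x hxS)
      simp only [hFidef]
      rw [hσx]
      ring
    have hder : ∀ i, ∀ x ∈ Bo, HasDerivAt
        (fun t : ℝ => Fi i (x + t • EuclideanSpace.single i (1:ℝ))) (gi i x) 0 := by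
      intro i x hx
      set e : EuclideanSpace ℝ (Fin (m+1)) := EuclideanSpace.single i (1:ℝ) with hedef
      have hnx : D ∈ nhds x := hDnhds x hx
      have hux2 : ContDiffAt ℝ 2 u x := hu.contDiffAt hnx
      have hσx2 : ContDiffAt ℝ 2 σ x := hσ.contDiffAt hnx
      have hdu : DifferentiableAt ℝ u x := hux2.differentiableAt two_ne_zero
      have hdσ : DifferentiableAt ℝ σ x := hσx2.differentiableAt two_ne_zero
      have hdpu : DifferentiableAt ℝ (pd i u) x := by
        have h1 : ContDiffAt ℝ 1 (fderiv ℝ u) x := hux2.fderiv_right (by norm_num)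
        have h2 : ContDiffAt ℝ 1 (fun y => fderiv ℝ u y e) x := h1.clm_apply contDiffAt_const
        exact h2.differentiableAt one_ne_zero
      have hdpσ : DifferentiableAt ℝ (pd i σ) x := by
        have h1 : ContDiffAt ℝ 1 (fderiv ℝ σ) x := hσx2.fderiv_right (by norm_num)
        have h2 : ContDiffAt ℝ 1 (fun y => fderiv ℝ σ y e) x := h1.clm_apply contDiffAt_const
        exact h2.differentiableAt one_ne_zero
      have hlu : HasDerivAt (fun t : ℝ => u (x + t • e)) (pd i u x) 0 := myLineDeriv e hdu
      have hlσ : HasDerivAt (fun t : ℝ => σ (x + t • e)) (pd i σ x) 0 := myLineDeriv e hdσ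
      have hlpσ : HasDerivAt (fun t : ℝ => pd i σ (x + t • e)) (pd i (pd i σ) x) 0 :=
        myLineDeriv e hdpσ
      have hlpu : HasDerivAt (fun t : ℝ => pd i u (x + t • e)) (pd i (pd i u) x) 0 :=
        myLineDeriv e hdpu
      have hev : ∀ v : EuclideanSpace ℝ (Fin (m+1)) → ℝ,
          (fun t : ℝ => pdW D i v (x + t • e)) =ᶠ[nhds (0:ℝ)]
            (fun t : ℝ => pd i v (x + t • e)) := by
        intro v
        have hcont : Continuous (fun t : ℝ => x + t • e) :=
          continuous_const.add (continuous_id.smul continuous_const)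
        have hx0 : (fun t : ℝ => x + t • e) 0 ∈ Bo := by simpa using hx
        have hpre : (fun t : ℝ => x + t • e) ⁻¹' Bo ∈ nhds (0:ℝ) :=
          hcont.continuousAt.preimage_mem_nhds (isOpen_ball.mem_nhds hx0)
        filter_upwards [hpre] with t ht
        exact pdW_eq_pd (hDnhds _ ht) i v
      have hP' : HasDerivAt (fun t : ℝ => pdW D i σ (x + t • e)) (pd i (pd i σ) x) 0 :=
        hlpσ.congr_of_eventuallyEq (hev σ)
      have hQ' : HasDerivAt (fun t : ℝ => pdW D i u (x + t • e)) (pd i (pd i u) x) 0 :=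
        hlpu.congr_of_eventuallyEq (hev u)
      have h1 := (((hlσ.const_mul (2*A)).sub ((hlσ.pow 2).const_mul 3)).mul hP')
      have h2 := hlu.mul h1
      have h3 := ((hlσ.pow 2).const_mul A).sub (hlσ.pow 3)
      have h4 := h3.mul hQ'
      have hh := h2.sub h4
      have e1 : pdW D i σ x = pd i σ x := pdW_eq_pd hnx i σ
      have e2 : pdW D i u x = pd i u x := pdW_eq_pd hnx i u
      have e3 : pdW D i (pdW D i σ) x = pd i (pd i σ) x := pdW2_eq_pd2 isOpen_ball hx hBoD i σ
      have e4 : pdW D i (pdW D i u) x = pd i (pd i u) x := pdW2_eq_pd2 isOpen_ball hx hBoD i u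
      simp only [hFidef, hgidef, hPdef, hQdef, hP2def, hQ2def]
      convert hh using 1
      case e'_4 => rfl
      case e'_5 => rfl
      · rfl
      simp only [zero_smul, add_zero, Pi.sub_apply, Pi.mul_apply, Pi.pow_apply]
      rw [e1, e2, e3, e4]
      unfold pd
      ring
    have hzero : ∀ i, ∫ x in Bo, gi i x = 0 := by
      intro i
      have h := key_div x₀ (2*R₀) h2R (Fi i) (gi i) i (hFicont i) (hFi0 i) (hgicont i) (hder i)
      rw [hBodef]
      exact h
    -- summed identity
    have hIOn : ∀ {h : EuclideanSpace ℝ (Fin (m+1)) → ℝ},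
        ContinuousOn h D → IntegrableOn h Bo volume := fun hc =>
      (hc.integrableOn_compact (isCompact_closedBall _ _)).mono_set hBoD
    set S : EuclideanSpace ℝ (Fin (m+1)) → ℝ := fun x => ∑ i, (P i x)^2 with hSdef
    set Lσ : EuclideanSpace ℝ (Fin (m+1)) → ℝ := fun x => ∑ i, P2 i x with hLσdef
    set Lu : EuclideanSpace ℝ (Fin (m+1)) → ℝ := fun x => ∑ i, Q2 i x with hLudef
    set gsum : EuclideanSpace ℝ (Fin (m+1)) → ℝ := fun x =>
      u x * (2*A - 6*σ x) * S x + u x * (2*A*σ x - 3*(σ x)^2) * Lσ x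
        - (A*(σ x)^2 - (σ x)^3) * Lu x with hgsumdef
    have hgsum_eq : ∀ x, gsum x = ∑ i, gi i x := by
      intro x
      simp only [hgsumdef, hgidef, hSdef, hLσdef, hLudef]
      rw [Finset.mul_sum, Finset.mul_sum, Finset.mul_sum, ← Finset.sum_add_distrib,
        ← Finset.sum_sub_distrib]
    have hScont : ContinuousOn S D := by
      apply continuousOn_finset_sum
      intro i _
      exact (hPcont i).pow 2
    have hLσcont : ContinuousOn Lσ D := by
      apply continuousOn_finset_sum
      intro i _
      exact hP2cont i
    have hLucont : ContinuousOn Lu D := by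
      apply continuousOn_finset_sum
      intro i _
      exact hQ2cont i
    have hgsumcont : ContinuousOn gsum D := by
      apply ContinuousOn.sub
      · exact ((hucont.mul (continuousOn_const.sub (continuousOn_const.mul hσcont))).mul
          hScont).add ((hucont.mul ((continuousOn_const.mul hσcont).sub
            (continuousOn_const.mul (hσcont.pow 2)))).mul hLσcont)
      · exact ((continuousOn_const.mul (hσcont.pow 2)).sub (hσcont.pow 3)).mul hLucont
    have hIzero : ∫ x in Bo, gsum x = 0 := by
      calc ∫ x in Bo, gsum x = ∫ x in Bo, ∑ i, gi i x := by
            apply integral_congr_ae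
            exact Filter.Eventually.of_forall (fun x => hgsum_eq x)
        _ = ∑ i, ∫ x in Bo, gi i x :=
            integral_finset_sum _ (fun i _ => hIOn (hgicont i))
        _ = 0 := by simp [hzero]
    -- pointwise lower bound on the ball
    have hptwise : ∀ x ∈ Bo, (c₀/2) * (u x * (σ x)^3) - c₁ * (A*(σ x)^2 - (σ x)^3) ≤ gsum x := by
      intro x hx
      have hxD : x ∈ D := hBoD hx
      have hxz : x - x₀ ∈ Metric.ball (0:EuclideanSpace ℝ (Fin (m+1))) (2*R₀) := hmemB x hx
      have hshift2 : ∀ i : Fin (m+1), pd i (pd i σ) x = pd i (pd i φ) (x - x₀) := by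
        intro i
        have hs1 : pd i σ = fun y => pd i φ (y - x₀) := by
          rw [hσdef]; exact pd_shift i φ x₀
        rw [hs1]
        exact congrFun (pd_shift i (pd i φ) x₀) x
      have hLσx : Lσ x = -(c₀/2 * σ x) := by
        have h1 : Lσ x = ∑ i, pd i (pd i σ) x := by
          simp only [hLσdef, hP2def]
          exact Finset.sum_congr rfl (fun i _ => pdW2_eq_pd2 isOpen_ball hx hBoD i σ)
        have h2 : Lσ x = lap φ (x - x₀) := by
          rw [h1]
          exact Finset.sum_congr rfl (fun i _ => hshift2 i)
        have h3 := hφeq _ hxz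
        have hσfx : σ x = φ (x - x₀) := rfl
        rw [h2, hσfx]
        linarith
      have hLux : Lu x = -(f (u x)) := by
        have h1 : Lu x = lap u x := by
          simp only [hLudef, hQ2def]
          exact Finset.sum_congr rfl (fun i _ => pdW2_eq_pd2 isOpen_ball hx hBoD i u)
        have h2 := hueq x hx
        rw [h1]
        linarith
      have hσx0 : 0 ≤ σ x := hσ0 x hxD
      have hσxM : σ x ≤ M₀ := hσM x hxD
      have hux0 : 0 < u x := hupos x hxD
      have hfux : c₀ * u x - c₁ ≤ f (u x) := hf _ hux0
      have hSx0 : 0 ≤ S x := Finset.sum_nonneg (fun i _ => sq_nonneg _)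
      have hψ0 : (0:ℝ) ≤ A*(σ x)^2 - (σ x)^3 := by nlinarith
      have hterm1 : 0 ≤ u x * (2*A - 6*σ x) * S x := by
        apply mul_nonneg (mul_nonneg hux0.le _) hSx0
        nlinarith
      have hterm2 : (A*(σ x)^2 - (σ x)^3) * (c₀ * u x - c₁) ≤ (A*(σ x)^2 - (σ x)^3) * f (u x) :=
        mul_le_mul_of_nonneg_left hfux hψ0
      simp only [hgsumdef]
      rw [hLσx, hLux]
      have hexp : (u x * (2*A - 6*σ x) * S x + u x * (2*A*σ x - 3*(σ x)^2) * (-(c₀/2 * σ x))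
          - (A*(σ x)^2 - (σ x)^3) * (-(f (u x))))
          - ((c₀/2) * (u x * (σ x)^3) - c₁ * (A*(σ x)^2 - (σ x)^3))
          = u x * (2*A - 6*σ x) * S x
            + ((A*(σ x)^2 - (σ x)^3) * f (u x)
              - (A*(σ x)^2 - (σ x)^3) * (c₀ * u x - c₁)) := by ring
      rw [← sub_nonneg, hexp]
      have := sub_nonneg.2 hterm2
      linarith [hterm1, this]
    -- integrate the inequality
    have hIab : IntegrableOn (fun x => u x * (σ x)^3) Bo volume := hIOn (hucont.mul (hσcont.pow 3))
    have hIψ : IntegrableOn (fun x => A*(σ x)^2 - (σ x)^3) Bo volume :=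
      hIOn ((continuousOn_const.mul (hσcont.pow 2)).sub (hσcont.pow 3))
    have hle1 : ∫ x in Bo, ((c₀/2) * (u x * (σ x)^3) - c₁ * (A*(σ x)^2 - (σ x)^3))
        ≤ ∫ x in Bo, gsum x := by
      apply setIntegral_mono_on _ (hIOn hgsumcont) measurableSet_ball hptwise
      exact (hIab.const_mul _).sub (hIψ.const_mul _)
    rw [hIzero, integral_sub (hIab.const_mul _) (hIψ.const_mul _),
      integral_const_mul, integral_const_mul] at hle1
    set I1 : ℝ := ∫ x in Bo, u x * (σ x)^3 with hI1def
    set J : ℝ := ∫ x in Bo, (A*(σ x)^2 - (σ x)^3) with hJdef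
    have hJV : J ≤ V * (A*M₀^2) := by
      have hc : IntegrableOn (fun _ : EuclideanSpace ℝ (Fin (m+1)) => A*M₀^2) Bo volume := by
        refine integrableOn_const (lt_top_iff_ne_top.1 ?_)
        rw [hBodef]
        exact measure_ball_lt_top
      calc J ≤ ∫ _x in Bo, A*M₀^2 := by
            apply setIntegral_mono_on hIψ hc measurableSet_ball
            intro x hx
            have h1 := hσ0 x (hBoD hx)
            have h2 := hσM x (hBoD hx)
            have h4 : (σ x)^2 ≤ M₀^2 := pow_le_pow_left₀ h1 h2 2
            have h5 : 0 ≤ (σ x)^3 := pow_nonneg h1 3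
            nlinarith [mul_le_mul_of_nonneg_left h4 hA0.le, h5]
        _ = (volume Bo).toReal * (A*M₀^2) := by rw [setIntegral_const]; rfl
        _ = V * (A*M₀^2) := by
            congr 1
            rw [hVdef, hBodef, EuclideanSpace.volume_ball, EuclideanSpace.volume_ball]
    have hI1 : I1 ≤ 2*c₁/c₀ * (V * (A*M₀^2)) := by
      rw [div_mul_eq_mul_div, le_div_iff₀ hc₀]
      nlinarith [hle1, hJV]
    -- pass to the smaller ball
    have hsmall : Metric.ball x₀ R₀ ⊆ Bo := by
      rw [hBodef]
      exact ball_subset_ball (by linarith)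
    have hptw2 : ∀ x ∈ Metric.ball x₀ R₀, u x ≤ (1/δ^3) * (u x * (σ x)^3) := by
      intro x hx
      have hxD : x ∈ D := hBoD (hsmall hx)
      have hxz : x - x₀ ∈ Metric.closedBall (0:EuclideanSpace ℝ (Fin (m+1))) R₀ := by
        rw [mem_closedBall]
        rw [mem_ball] at hx
        simpa [dist_eq_norm] using hx.le
      have hδσ : δ ≤ σ x := hz₀min hxz
      have hu0 := hupos x hxD
      have h3 : δ^3 ≤ (σ x)^3 := pow_le_pow_left₀ hδ.le hδσ 3
      rw [one_div, inv_mul_eq_div, le_div_iff₀ (pow_pos hδ 3)]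
      nlinarith
    have hmono1 : ∫ x in Metric.ball x₀ R₀, u x
        ≤ ∫ x in Metric.ball x₀ R₀, (1/δ^3) * (u x * (σ x)^3) := by
      apply setIntegral_mono_on (MeasureTheory.IntegrableOn.mono_set (hIOn hucont) hsmall)
        (MeasureTheory.IntegrableOn.mono_set (hIab.const_mul _) hsmall) measurableSet_ball hptw2
    have hmono2 : ∫ x in Metric.ball x₀ R₀, (1/δ^3) * (u x * (σ x)^3)
        = (1/δ^3) * ∫ x in Metric.ball x₀ R₀, u x * (σ x)^3 := integral_const_mul _ _
    have hmono3 : ∫ x in Metric.ball x₀ R₀, u x * (σ x)^3 ≤ I1 := by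
      rw [hI1def]
      apply setIntegral_mono_set hIab _ hsmall.eventuallyLE
      filter_upwards [ae_restrict_mem measurableSet_ball] with x hx
      exact mul_nonneg (hupos x (hBoD hx)).le (pow_nonneg (hσ0 x (hBoD hx)) 3)
    have hfinal : ∫ x in Metric.ball x₀ R₀, u x ≤ (1/δ^3) * (2*c₁/c₀ * (V * (A*M₀^2))) := by
      calc ∫ x in Metric.ball x₀ R₀, u x
          ≤ (1/δ^3) * ∫ x in Metric.ball x₀ R₀, u x * (σ x)^3 := by rw [← hmono2]; exact hmono1
        _ ≤ (1/δ^3) * I1 := by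
            apply mul_le_mul_of_nonneg_left hmono3
            positivity
        _ ≤ (1/δ^3) * (2*c₁/c₀ * (V * (A*M₀^2))) := by
            apply mul_le_mul_of_nonneg_left hI1
            positivity
    calc ∫ x in Metric.ball x₀ R₀, u x ≤ (1/δ^3) * (2*c₁/c₀ * (V * (A*M₀^2))) := hfinal
      _ = 2*c₁/c₀ * (V * (A*M₀^2)) / δ^3 := by ring
end

section
/- Let f : (0,∞) → ℝ satisfy f(s) ≥ c₀ s - c₁ for some c₀, c₁ > 0. Then there is no function u ∈ C²(closure of the half-space ℝⁿ₊) satisfying -Δu = f(u) in ℝⁿ₊, u = 0 on ∂ℝⁿ₊, uₓₙ > 0 on the closed half-space, and uₓₙₓₙ ≥ 0 on the closed half-space. -/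
open Metric MeasureTheory Set

open Finset

lemma hasFDerivAt_coord {m : ℕ} (j : Fin m) (x : EuclideanSpace ℝ (Fin m)) :
    HasFDerivAt (fun x : EuclideanSpace ℝ (Fin m) => x j)
      (EuclideanSpace.proj (𝕜 := ℝ) j) x := by
  have h := (EuclideanSpace.proj (𝕜 := ℝ) j).hasFDerivAt (x := x)
  convert h using 2
  rfl

lemma hasFDerivAt_prod_coord {m : ℕ} {g g' : Fin m → ℝ → ℝ}
    (hg : ∀ j t, HasDerivAt (g j) (g' j t) t) (x : EuclideanSpace ℝ (Fin m)) :
    HasFDerivAt (fun x : EuclideanSpace ℝ (Fin m) => ∏ j, g j (x j))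
      (∑ j, (∏ k ∈ univ.erase j, g k (x k)) •
        ((g' j (x j)) • (EuclideanSpace.proj j : EuclideanSpace ℝ (Fin m) →L[ℝ] ℝ))) x := by
  exact HasFDerivAt.finset_prod (fun j _ =>
    (hg j (x j)).comp_hasFDerivAt x (hasFDerivAt_coord j x))

lemma pd_prod {m : ℕ} {g g' : Fin m → ℝ → ℝ}
    (hg : ∀ j t, HasDerivAt (g j) (g' j t) t) (i : Fin m) (x : EuclideanSpace ℝ (Fin m)) :
    pd i (fun x => ∏ j, g j (x j)) x = (∏ k ∈ univ.erase i, g k (x k)) * g' i (x i) := by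
  rw [pd, (hasFDerivAt_prod_coord hg x).fderiv]
  simp [EuclideanSpace.single_apply, mul_ite, Finset.sum_ite_eq]

lemma differentiableAt_prod_coord {m : ℕ} {g g' : Fin m → ℝ → ℝ}
    (hg : ∀ j t, HasDerivAt (g j) (g' j t) t) (x : EuclideanSpace ℝ (Fin m)) :
    DifferentiableAt ℝ (fun x : EuclideanSpace ℝ (Fin m) => ∏ j, g j (x j)) x :=
  (hasFDerivAt_prod_coord hg x).differentiableAt

lemma pd_pd_prod {m : ℕ} {g g' g'' : Fin m → ℝ → ℝ}
    (hg : ∀ j t, HasDerivAt (g j) (g' j t) t)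
    (hg' : ∀ j t, HasDerivAt (g' j) (g'' j t) t) (i : Fin m) (x : EuclideanSpace ℝ (Fin m)) :
    pd i (pd i (fun x => ∏ j, g j (x j))) x
      = (∏ k ∈ univ.erase i, g k (x k)) * g'' i (x i) := by
  have h1 : pd i (fun x : EuclideanSpace ℝ (Fin m) => ∏ j, g j (x j))
      = fun x => ∏ j, Function.update g i (g' i) j (x j) := by
    funext y
    rw [pd_prod hg, ← Finset.prod_erase_mul univ _ (Finset.mem_univ i)]
    congr 1
    · exact Finset.prod_congr rfl fun k hk => by
        rw [Function.update_of_ne (Finset.ne_of_mem_erase hk)]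
    · rw [Function.update_self]
  have hG : ∀ j t, HasDerivAt ((Function.update g i (g' i)) j)
      ((Function.update g' i (g'' i)) j t) t := by
    intro j t
    rcases eq_or_ne j i with rfl | hji
    · simpa only [Function.update_self] using hg' j t
    · simp only [Function.update_of_ne hji]; exact hg j t
  rw [h1, pd_prod hG i x, Function.update_self]
  congr 1
  exact Finset.prod_congr rfl fun k hk => by
    rw [Function.update_of_ne (Finset.ne_of_mem_erase hk)]

lemma pd_prod_eq {m : ℕ} {g g' : Fin m → ℝ → ℝ}
    (hg : ∀ j t, HasDerivAt (g j) (g' j t) t) (i : Fin m) :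
    pd i (fun x : EuclideanSpace ℝ (Fin m) => ∏ j, g j (x j))
      = fun x => ∏ j, Function.update g i (g' i) j (x j) := by
  funext y
  rw [pd_prod hg, ← Finset.prod_erase_mul univ _ (Finset.mem_univ i)]
  congr 1
  · exact Finset.prod_congr rfl fun k hk => by
      rw [Function.update_of_ne (Finset.ne_of_mem_erase hk)]
  · rw [Function.update_self]

section cosfam
variable {m : ℕ} (ε : ℝ) (c : EuclideanSpace ℝ (Fin m))

lemma hasDerivAt_cosfam (j : Fin m) (t : ℝ) :
    HasDerivAt (fun t => Real.cos (ε * (t - c j))) (-(Real.sin (ε * (t - c j)) * ε)) t := by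
  simpa using (((hasDerivAt_id t).sub_const (c j)).const_mul ε).cos

lemma hasDerivAt_cosfam' (j : Fin m) (t : ℝ) :
    HasDerivAt (fun t => -(Real.sin (ε * (t - c j)) * ε))
      (-(Real.cos (ε * (t - c j)) * ε * ε)) t := by
  simpa [mul_assoc, mul_comm, mul_left_comm] using
    ((((hasDerivAt_id t).sub_const (c j)).const_mul ε).sin.mul_const ε).fun_neg

lemma pd_pd_cosprod (i : Fin m) (x : EuclideanSpace ℝ (Fin m)) :
    pd i (pd i (fun x => ∏ j, Real.cos (ε * (x j - c j)))) x
      = -(ε ^ 2 * ∏ j, Real.cos (ε * (x j - c j))) := by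
  rw [pd_pd_prod (hasDerivAt_cosfam ε c) (hasDerivAt_cosfam' ε c) i x]
  rw [← Finset.prod_erase_mul univ _ (Finset.mem_univ i)]
  ring

lemma differentiableAt_pd_cosprod (i : Fin m) (x : EuclideanSpace ℝ (Fin m)) :
    DifferentiableAt ℝ (pd i (fun x => ∏ j, Real.cos (ε * (x j - c j)))) x := by
  rw [pd_prod_eq (hasDerivAt_cosfam ε c) i]
  apply differentiableAt_prod_coord (g' := Function.update
    (fun j t => -(Real.sin (ε * (t - c j)) * ε)) i (fun t => -(Real.cos (ε * (t - c i)) * ε * ε)))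
  intro j t
  rcases eq_or_ne j i with rfl | hji
  · simpa only [Function.update_self] using hasDerivAt_cosfam' ε c j t
  · simp only [Function.update_of_ne hji]; exact hasDerivAt_cosfam ε c j t

end cosfam

open Filter in
lemma second_deriv_nonpos_of_isLocalMax {h p : ℝ → ℝ} {q : ℝ}
    (hmax : IsLocalMax h 0)
    (hp : ∀ᶠ t in nhds (0 : ℝ), HasDerivAt h (p t) t)
    (hq : HasDerivAt p q 0) : q ≤ 0 := by
  by_contra hq0
  push_neg at hq0
  have hp0 : p 0 = 0 := hmax.hasDerivAt_eq_zero hp.self_of_nhds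
  -- slope of p tends to q
  have hslope : Tendsto (slope p 0) (nhdsWithin 0 {(0:ℝ)}ᶜ) (nhds q) :=
    hasDerivAt_iff_tendsto_slope.mp hq
  have hev : ∀ᶠ t in nhdsWithin 0 {(0:ℝ)}ᶜ, q / 2 < slope p 0 t :=
    hslope.eventually (eventually_gt_nhds (half_lt_self hq0))
  obtain ⟨δ₂, hδ₂pos, hδ₂⟩ := Metric.mem_nhdsWithin_iff.mp hev
  obtain ⟨δ₁, hδ₁pos, hδ₁⟩ := Metric.eventually_nhds_iff.mp (hp.and hmax)
  set t := min δ₁ δ₂ / 2 with ht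
  have htpos : 0 < t := by positivity
  have htδ₁ : t < δ₁ := by
    have := min_le_left δ₁ δ₂; linarith
  have htδ₂ : t < δ₂ := by
    have := min_le_right δ₁ δ₂; linarith
  have hmem : ∀ s ∈ Set.Icc (0:ℝ) t, dist s 0 < δ₁ := by
    intro s hs
    rw [Real.dist_eq, sub_zero, abs_of_nonneg hs.1]
    exact lt_of_le_of_lt hs.2 htδ₁
  obtain ⟨ξ, hξ, hξeq⟩ := exists_hasDerivAt_eq_slope h p htpos
    (fun s hs => ((hδ₁ (hmem s hs)).1).continuousAt.continuousWithinAt)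
    (fun s hs => (hδ₁ (hmem s (Set.mem_Icc_of_Ioo hs))).1)
  have hht : h t ≤ h 0 := (hδ₁ (hmem t ⟨le_of_lt htpos, le_refl t⟩)).2
  have hslopele : p ξ ≤ 0 := by
    rw [hξeq]
    apply div_nonpos_of_nonpos_of_nonneg <;> linarith [hξ.1, hξ.2]
  have hξd : dist ξ 0 < δ₂ := by
    rw [Real.dist_eq, sub_zero, abs_of_nonneg (le_of_lt hξ.1)]
    exact lt_trans hξ.2 htδ₂
  have := hδ₂ ⟨Metric.mem_ball.mpr hξd, by simpa using ne_of_gt hξ.1⟩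
  simp only [Set.mem_setOf_eq, slope_def_field, hp0, sub_zero] at this
  have h2 : p ξ / ξ ≤ 0 := div_nonpos_of_nonpos_of_nonneg hslopele (le_of_lt hξ.1)
  linarith

lemma continuous_coord {m : ℕ} (j : Fin m) :
    Continuous (fun x : EuclideanSpace ℝ (Fin m) => x j) := by
  have := (EuclideanSpace.proj (𝕜 := ℝ) j).continuous
  convert this using 2
  rfl

lemma isCompact_coordbox {m : ℕ} (a b : Fin m → ℝ) :
    IsCompact {x : EuclideanSpace ℝ (Fin m) | ∀ j, x j ∈ Set.Icc (a j) (b j)} := by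
  have heq : {x : EuclideanSpace ℝ (Fin m) | ∀ j, x j ∈ Set.Icc (a j) (b j)}
      = (EuclideanSpace.equiv (Fin m) ℝ).toHomeomorph ⁻¹'
        (Set.univ.pi fun j => Set.Icc (a j) (b j)) := by
    ext x
    simp only [Set.mem_setOf_eq, Set.mem_preimage, Set.mem_univ_pi]
    rfl
  rw [heq]
  exact (Homeomorph.isCompact_preimage _).mpr (isCompact_univ_pi fun j => isCompact_Icc)

set_option maxHeartbeats 2000000 in
/-- Nonexistence in the half-space: if `f(s) ≥ c₀ s - c₁` with `c₀, c₁ > 0`, there is no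
`u ∈ C²` of the closed half-space solving `-Δu = f(u)` in the open half-space, vanishing on
the boundary, with `uₓₙ > 0` and `uₓₙₓₙ ≥ 0` on the closed half-space. -/
theorem stmt12 {n : ℕ} (c₀ c₁ : ℝ) (hc₀ : 0 < c₀) (hc₁ : 0 < c₁)
    (f : ℝ → ℝ) (hf : ∀ s > (0 : ℝ), c₀ * s - c₁ ≤ f s)
    (u : EuclideanSpace ℝ (Fin (n + 1)) → ℝ)
    (hu : ContDiffOn ℝ 2 u {x | 0 ≤ x (Fin.last n)})
    (heq : ∀ x, 0 < x (Fin.last n) → -lap u x = f (u x))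
    (hbd : ∀ x, x (Fin.last n) = 0 → u x = 0)
    (hmono : ∀ x, 0 ≤ x (Fin.last n) → 0 < pd (Fin.last n) u x)
    (hconv : ∀ x, 0 ≤ x (Fin.last n) → 0 ≤ pd (Fin.last n) (pd (Fin.last n) u) x) :
    False := by
  set lst := Fin.last n with hlst
  set E : EuclideanSpace ℝ (Fin (n+1)) := EuclideanSpace.single lst 1 with hE
  have hEco : ∀ j, E j = if j = lst then 1 else 0 := fun j => EuclideanSpace.single_apply lst 1 j
  set V : Set (EuclideanSpace ℝ (Fin (n+1))) := {x | 0 < x lst} with hV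
  have hVopen : IsOpen V := isOpen_lt continuous_const (continuous_coord lst)
  have hVsub : V ⊆ {x | 0 ≤ x lst} := fun x (hx : 0 < x lst) => (le_of_lt hx : (0:ℝ) ≤ x lst)
  -- u is differentiable at every point of the closed half-space
  have hdiffAt : ∀ x : EuclideanSpace ℝ (Fin (n+1)), 0 ≤ x lst → DifferentiableAt ℝ u x := by
    intro x hx
    by_contra hd
    have h1 := hmono x hx
    rw [pd, fderiv_zero_of_not_differentiableAt hd] at h1
    simp at h1
  have hC2 : ∀ x ∈ V, ContDiffAt ℝ 2 u x := by
    intro x hx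
    exact hu.contDiffAt (mem_nhds_iff.mpr ⟨V, hVsub, hVopen, hx⟩)
  -- pd j u is differentiable on V
  have hpd_diff : ∀ (j : Fin (n+1)), ∀ x ∈ V, DifferentiableAt ℝ (pd j u) x := by
    intro j x hx
    have h1 : ContDiffAt ℝ 1 (fderiv ℝ u) x := (hC2 x hx).fderiv_right (by norm_num)
    exact (h1.differentiableAt one_ne_zero).clm_apply (differentiableAt_const _)
  -- pd lst u is continuous on V
  have hpdc : ContinuousOn (pd lst u) V := by
    have hfc : ContinuousOn (fderiv ℝ u) V :=
      (hu.mono hVsub).continuousOn_fderiv_of_isOpen hVopen (by norm_num)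
    exact hfc.clm_apply continuousOn_const
  -- lines
  have hline : ∀ (x' : EuclideanSpace ℝ (Fin (n+1))) (w : EuclideanSpace ℝ (Fin (n+1))) (t : ℝ),
      HasDerivAt (fun s : ℝ => x' + s • w) w t := by
    intro x' w t
    simpa using ((hasDerivAt_id t).smul_const w).const_add x'
  have hcoordline : ∀ (x' : EuclideanSpace ℝ (Fin (n+1))) (s : ℝ), (x' + s • E) lst = x' lst + s := by
    intro x' s
    simp [PiLp.add_apply, PiLp.smul_apply, hEco, smul_eq_mul]
  have hu_line : ∀ (x' : EuclideanSpace ℝ (Fin (n+1))), x' lst = 0 → ∀ y : ℝ, 0 ≤ y →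
      HasDerivAt (fun s : ℝ => u (x' + s • E)) (pd lst u (x' + y • E)) y := by
    intro x' hx' y hy
    have hmem : 0 ≤ (x' + y • E) lst := by rw [hcoordline, hx']; simpa using hy
    exact ((hdiffAt _ hmem).hasFDerivAt).comp_hasDerivAt y (hline x' E y)
  -- strict monotonicity along vertical lines
  have hsm : ∀ (x' : EuclideanSpace ℝ (Fin (n+1))), x' lst = 0 →
      StrictMonoOn (fun s : ℝ => u (x' + s • E)) (Set.Ici 0) := by
    intro x' hx'
    apply strictMonoOn_of_deriv_pos (convex_Ici 0)
    · intro y hy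
      exact ((hu_line x' hx' y hy).continuousAt).continuousWithinAt
    · intro y hy
      rw [interior_Ici] at hy
      rw [(hu_line x' hx' y (le_of_lt hy)).deriv]
      exact hmono _ (by rw [hcoordline, hx']; simpa using le_of_lt hy)
  -- monotonicity of pd lst u along vertical lines above height 1
  have hpm : ∀ (x' : EuclideanSpace ℝ (Fin (n+1))), x' lst = 0 →
      MonotoneOn (fun s : ℝ => pd lst u (x' + s • E)) (Set.Ici 1) := by
    intro x' hx'
    have hVmem : ∀ y : ℝ, (1 : ℝ) ≤ y → (x' + y • E) ∈ V := by
      intro y hy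
      show 0 < (x' + y • E) lst
      rw [hcoordline, hx']; linarith
    have hDer : ∀ y : ℝ, 1 ≤ y →
        HasDerivAt (fun s : ℝ => pd lst u (x' + s • E)) (pd lst (pd lst u) (x' + y • E)) y := by
      intro y hy
      exact ((hpd_diff lst _ (hVmem y hy)).hasFDerivAt).comp_hasDerivAt y (hline x' E y)
    apply monotoneOn_of_deriv_nonneg (convex_Ici 1)
    · intro y hy
      exact ((hDer y hy).continuousAt).continuousWithinAt
    · intro y hy
      rw [interior_Ici] at hy
      exact ((hDer y (le_of_lt hy)).differentiableAt).differentiableWithinAt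
    · intro y hy
      rw [interior_Ici] at hy
      rw [(hDer y (le_of_lt hy)).deriv]
      exact hconv _ (by rw [hcoordline, hx']; have := Set.mem_Ioi.mp hy; linarith)
  -- constants
  obtain ⟨ε, hεdef⟩ : ∃ ε : ℝ, ε = Real.sqrt (c₀ / (2 * (n + 1))) := ⟨_, rfl⟩
  have hε : 0 < ε := by
    rw [hεdef]
    exact Real.sqrt_pos.mpr (by positivity)
  have hε2 : ((n : ℝ) + 1) * ε ^ 2 = c₀ / 2 := by
    rw [hεdef, Real.sq_sqrt (by positivity : (0:ℝ) ≤ c₀ / (2 * (n + 1)))]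
    field_simp
  obtain ⟨R, hRdef⟩ : ∃ R : ℝ, R = Real.pi / (2 * ε) := ⟨_, rfl⟩
  have hR : 0 < R := by
    rw [hRdef]
    exact div_pos Real.pi_pos (by linarith)
  have hεR : ε * R = Real.pi / 2 := by
    rw [hRdef]
    field_simp
  -- the compact slab at height 1 and the lower bound η
  set K : Set (EuclideanSpace ℝ (Fin (n+1))) :=
    {x | ∀ j, x j ∈ Set.Icc (if j = lst then 1 else -R) (if j = lst then 1 else R)} with hK
  have hKcompact : IsCompact K := isCompact_coordbox _ _
  have hEK : E ∈ K := by
    intro j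
    rw [hEco j]
    rcases eq_or_ne j lst with rfl | hj
    · simp
    · simp [hj]
      first
      | (constructor <;> linarith)
      | linarith
  have hKlst : ∀ x ∈ K, x lst = 1 := by
    intro x hx
    have h := hx lst
    simp at h
    exact h
  have hKV : K ⊆ V := by
    intro x hx
    show 0 < x lst
    rw [hKlst x hx]
    norm_num
  obtain ⟨z₀, hz₀K, hz₀min⟩ := hKcompact.exists_isMinOn ⟨E, hEK⟩ (hpdc.mono hKV)
  obtain ⟨η, hηdef⟩ : ∃ η : ℝ, η = pd lst u z₀ := ⟨_, rfl⟩
  have hη : 0 < η := by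
    rw [hηdef]
    exact hmono z₀ (le_of_lt (hKV hz₀K))
  -- growth estimate
  have hgrow : ∀ x : EuclideanSpace ℝ (Fin (n+1)), (∀ j, j ≠ lst → |x j| ≤ R) →
      1 ≤ x lst → η * (x lst - 1) < u x := by
    intro x hxj hx1
    set x' : EuclideanSpace ℝ (Fin (n+1)) := x - (x lst) • E with hx'def
    have hx'0 : x' lst = 0 := by
      rw [hx'def]
      simp [PiLp.sub_apply, PiLp.smul_apply, hEco, smul_eq_mul]
    have hx'co : ∀ j, j ≠ lst → x' j = x j := by
      intro j hj
      rw [hx'def]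
      simp [PiLp.sub_apply, PiLp.smul_apply, hEco, hj, smul_eq_mul]
    have hxdec : ∀ s : ℝ, x' + s • E = x - (x lst - s) • E := by
      intro s
      rw [hx'def]
      module
    have hxy : x' + (x lst) • E = x := by
      rw [hxdec]
      simp
    have hx'1K : x' + (1:ℝ) • E ∈ K := by
      intro j
      rcases eq_or_ne j lst with rfl | hj
      · rw [hcoordline x' 1, hx'0]
        simp
      · have : (x' + (1:ℝ) • E) j = x j := by
          simp [PiLp.add_apply, PiLp.smul_apply, hEco, hj, smul_eq_mul, hx'co j hj]
        rw [this]
        simp [hj]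
        exact abs_le.mp (hxj j hj)
    have h1pos : 0 < u (x' + (1:ℝ) • E) := by
      have h0 := hsm x' hx'0 (Set.mem_Ici.mpr (le_refl 0)) (Set.mem_Ici.mpr zero_le_one) zero_lt_one
      simpa [hbd x' hx'0] using h0
    have hP1 : η ≤ pd lst u (x' + (1:ℝ) • E) := by
      rw [hηdef]
      exact hz₀min (hx'1K)
    rcases eq_or_lt_of_le hx1 with heq1 | hlt1
    · have hx'e : x' + (1:ℝ) • E = x := by rw [heq1]; exact hxy
      have hz : η * (x lst - 1) = 0 := by rw [← heq1]; ring
      rw [hz, ← hx'e]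
      exact h1pos
    · -- MVT on [1, x lst]
      obtain ⟨ξ, hξmem, hξeq⟩ := exists_hasDerivAt_eq_slope (fun s => u (x' + s • E))
        (fun s => pd lst u (x' + s • E)) hlt1
        (fun s hs => ((hu_line x' hx'0 s (by linarith [hs.1])).continuousAt).continuousWithinAt)
        (fun s hs => hu_line x' hx'0 s (by linarith [hs.1.le]))
      have hPmono := hpm x' hx'0 (Set.mem_Ici.mpr (le_refl 1))
        (Set.mem_Ici.mpr hξmem.1.le) hξmem.1.le
      have hPξ : η ≤ pd lst u (x' + ξ • E) := le_trans hP1 hPmono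
      rw [hξeq] at hPξ
      simp only at hPξ
      rw [le_div_iff₀ (by linarith [hξmem.1, hξmem.2] : (0:ℝ) < x lst - 1)] at hPξ
      rw [hxy] at hPξ
      linarith [h1pos]
  -- the box high up
  obtain ⟨sh, hshdef⟩ : ∃ sh : ℝ, sh = R + 2 + 2 * c₁ / (c₀ * η) := ⟨_, rfl⟩
  set c : EuclideanSpace ℝ (Fin (n+1)) := EuclideanSpace.single lst sh with hcdef
  have hcco : ∀ j, c j = if j = lst then sh else 0 := fun j => EuclideanSpace.single_apply lst sh j
  set Kb : Set (EuclideanSpace ℝ (Fin (n+1))) :=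
    {x | ∀ j, x j ∈ Set.Icc (c j - R) (c j + R)} with hKb
  have hKbcompact : IsCompact Kb := isCompact_coordbox _ _
  have hcKb : c ∈ Kb := by
    intro j
    constructor <;> [linarith; linarith]
  have hshR : 2 + 2 * c₁ / (c₀ * η) ≤ sh - R := by
    rw [hshdef]; linarith
  have hpos2 : 0 < 2 * c₁ / (c₀ * η) := div_pos (by linarith) (mul_pos hc₀ hη)
  have hKblst : ∀ x ∈ Kb, sh - R ≤ x lst := by
    intro x hx
    have h := hx lst
    rw [hcco lst] at h
    simp at h
    linarith [h.1]
  have hKbj : ∀ x ∈ Kb, ∀ j, j ≠ lst → |x j| ≤ R := by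
    intro x hx j hj
    have h := hx j
    rw [hcco j] at h
    simp [hj] at h
    rw [abs_le]
    exact ⟨by linarith [h.1], by linarith [h.2]⟩
  have hKbgrow : ∀ x ∈ Kb, η * (x lst - 1) < u x := by
    intro x hx
    exact hgrow x (hKbj x hx) (by linarith [hKblst x hx])
  have hKbupos : ∀ x ∈ Kb, 0 < u x := by
    intro x hx
    have h1 := hKbgrow x hx
    have h2 := hKblst x hx
    nlinarith
  have hKbsub : Kb ⊆ {x | 0 ≤ x lst} := by
    intro x hx
    have := hKblst x hx
    show (0:ℝ) ≤ x lst
    linarith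
  have hKbV : Kb ⊆ V := by
    intro x hx
    show 0 < x lst
    linarith [hKblst x hx]
  -- the test function φ
  set φ : EuclideanSpace ℝ (Fin (n+1)) → ℝ :=
    fun x => ∏ j, Real.cos (ε * (x j - c j)) with hφdef
  have hφdiff : ∀ y, DifferentiableAt ℝ φ y :=
    fun y => differentiableAt_prod_coord (hasDerivAt_cosfam ε c) y
  have hφcont : Continuous φ := by
    apply continuous_finset_prod
    intro j _
    exact Real.continuous_cos.comp ((continuous_const.mul ((continuous_coord j).sub continuous_const)))
  have hφc1 : φ c = 1 := by
    rw [hφdef]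
    simp
  have hφnonneg : ∀ x ∈ Kb, ∀ j, 0 ≤ Real.cos (ε * (x j - c j)) := by
    intro x hx j
    apply Real.cos_nonneg_of_mem_Icc
    have h := hx j
    simp at h
    rw [← hεR]
    constructor
    · nlinarith [h.1, hε]
    · nlinarith [h.2, hε]
  -- maximize φ/u over the box
  set F : EuclideanSpace ℝ (Fin (n+1)) → ℝ := fun x => φ x / u x with hFdef
  have hFc : ContinuousOn F Kb :=
    (hφcont.continuousOn).div (hu.continuousOn.mono hKbsub)
      (fun x hx => ne_of_gt (hKbupos x hx))
  obtain ⟨x₀, hx₀Kb, hx₀max⟩ := hKbcompact.exists_isMaxOn ⟨c, hcKb⟩ hFc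
  obtain ⟨μ, hμdef⟩ : ∃ μ : ℝ, μ = φ x₀ / u x₀ := ⟨_, rfl⟩
  have hux₀ : 0 < u x₀ := hKbupos x₀ hx₀Kb
  have hucpos : 0 < u c := hKbupos c hcKb
  have hmax' : ∀ x ∈ Kb, φ x / u x ≤ φ x₀ / u x₀ := fun x hx => hx₀max hx
  have hμpos : 0 < μ := by
    rw [hμdef]
    refine lt_of_lt_of_le ?_ (hmax' c hcKb)
    rw [hφc1]
    positivity
  have hφx₀ : φ x₀ = μ * u x₀ := by
    rw [hμdef]
    field_simp
  have hφx₀pos : 0 < φ x₀ := by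
    rw [hφx₀]
    exact mul_pos hμpos hux₀
  -- x₀ is interior to the box
  have hint : ∀ j, |x₀ j - c j| < R := by
    intro j
    by_contra hcon
    push_neg at hcon
    have hbox := hx₀Kb j
    rw [Set.mem_Icc] at hbox
    have h1 : -R ≤ x₀ j - c j := by linarith [hbox.1]
    have h2 : x₀ j - c j ≤ R := by linarith [hbox.2]
    have habs : |x₀ j - c j| = R := le_antisymm (abs_le.mpr ⟨h1, h2⟩) hcon
    have hzero : Real.cos (ε * (x₀ j - c j)) = 0 := by
      rcases (abs_eq (le_of_lt hR)).mp habs with h | h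
      · rw [h, hεR, Real.cos_pi_div_two]
      · rw [h, mul_neg, hεR, Real.cos_neg, Real.cos_pi_div_two]
    have : φ x₀ = 0 := by
      rw [hφdef]
      exact Finset.prod_eq_zero (Finset.mem_univ j) hzero
    linarith
  have hx₀V : x₀ ∈ V := hKbV hx₀Kb
  -- open box neighborhood
  have hOopen : IsOpen {x : EuclideanSpace ℝ (Fin (n+1)) | ∀ j, |x j - c j| < R} := by
    have hOeq : {x : EuclideanSpace ℝ (Fin (n+1)) | ∀ j, |x j - c j| < R}
        = ⋂ j, {x : EuclideanSpace ℝ (Fin (n+1)) | |x j - c j| < R} := by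
      ext x
      simp [Set.mem_iInter]
    rw [hOeq]
    exact isOpen_iInter_of_finite fun j =>
      isOpen_lt (continuous_abs.comp ((continuous_coord j).sub continuous_const)) continuous_const
  have hO_nhds : {x : EuclideanSpace ℝ (Fin (n+1)) | ∀ j, |x j - c j| < R} ∈ nhds x₀ :=
    hOopen.mem_nhds hint
  have hO_sub : {x : EuclideanSpace ℝ (Fin (n+1)) | ∀ j, |x j - c j| < R} ⊆ Kb := by
    intro x hx j
    have := hx j
    rw [abs_lt] at this
    exact ⟨by linarith [this.1], by linarith [this.2]⟩
  -- the comparison function g with local max at x₀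
  obtain ⟨g, hgdef⟩ : ∃ g : EuclideanSpace ℝ (Fin (n+1)) → ℝ,
      g = fun x => φ x - μ * u x := ⟨_, rfl⟩
  have hgx₀ : g x₀ = 0 := by
    rw [hgdef]
    simp only
    rw [hφx₀]
    ring
  have hgmax : IsLocalMax g x₀ := by
    filter_upwards [hO_nhds] with x hx
    have hxKb := hO_sub hx
    have h1 : φ x / u x ≤ μ := by
      rw [hμdef]
      exact hmax' x hxKb
    have h2 : φ x ≤ μ * u x := (div_le_iff₀ (hKbupos x hxKb)).mp h1
    have h3 : g x = φ x - μ * u x := by rw [hgdef]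
    rw [h3, hgx₀]
    linarith
  -- key inequality per coordinate
  have hkey : ∀ j : Fin (n+1), pd j (pd j φ) x₀ - μ * pd j (pd j u) x₀ ≤ 0 := by
    intro j
    have hgdiffV : ∀ y ∈ V, DifferentiableAt ℝ g y := by
      intro y hy
      rw [hgdef]
      exact (hφdiff y).sub ((hdiffAt y (le_of_lt hy)).const_mul μ)
    have hgrep : (pd j g) =ᶠ[nhds x₀] fun y => pd j φ y - μ * pd j u y := by
      filter_upwards [hVopen.mem_nhds hx₀V] with y hy
      show pd j g y = pd j φ y - μ * pd j u y
      have hd : fderiv ℝ g y = fderiv ℝ φ y - μ • fderiv ℝ u y := by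
        rw [hgdef]
        rw [fderiv_fun_sub (hφdiff y) ((hdiffAt y (le_of_lt hy)).const_mul μ),
          fderiv_const_mul (hdiffAt y (le_of_lt hy)) μ]
      rw [pd, hd]
      simp [pd]
    have hpdφd : DifferentiableAt ℝ (pd j φ) x₀ := by
      rw [hφdef]
      exact differentiableAt_pd_cosprod ε c j x₀
    have hRHSd : DifferentiableAt ℝ (fun y => pd j φ y - μ * pd j u y) x₀ :=
      hpdφd.sub ((hpd_diff j x₀ hx₀V).const_mul μ)
    have hpdgd : DifferentiableAt ℝ (pd j g) x₀ := by
      rw [hgrep.differentiableAt_iff]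
      exact hRHSd
    have hl0 : x₀ + (0:ℝ) • EuclideanSpace.single j (1:ℝ) = x₀ := by simp
    have hlt : Filter.Tendsto (fun t : ℝ => x₀ + t • EuclideanSpace.single j (1:ℝ))
        (nhds 0) (nhds x₀) := by
      have hc : Continuous (fun t : ℝ => x₀ + t • EuclideanSpace.single j (1:ℝ)) :=
        continuous_const.add (continuous_id.smul continuous_const)
      have := hc.tendsto 0
      rwa [hl0] at this
    have hev_line : ∀ᶠ t in nhds (0:ℝ),
        HasDerivAt (fun s : ℝ => g (x₀ + s • EuclideanSpace.single j (1:ℝ)))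
          (pd j g (x₀ + t • EuclideanSpace.single j (1:ℝ))) t := by
      filter_upwards [hlt.eventually (hVopen.mem_nhds hx₀V)] with t ht
      exact ((hgdiffV _ ht).hasFDerivAt).comp_hasDerivAt t
        (hline x₀ (EuclideanSpace.single j (1:ℝ)) t)
    have hlocmax : IsLocalMax (fun t : ℝ => g (x₀ + t • EuclideanSpace.single j (1:ℝ))) 0 := by
      refine (hlt.eventually hgmax).mono fun t ht => ?_
      simpa [hl0] using ht
    have hq : HasDerivAt (fun t : ℝ => pd j g (x₀ + t • EuclideanSpace.single j (1:ℝ)))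
        (pd j (pd j g) x₀) 0 := by
      have h := hpdgd
      rw [← hl0] at h
      have h2 := (h.hasFDerivAt).comp_hasDerivAt 0 (hline x₀ (EuclideanSpace.single j (1:ℝ)) 0)
      rw [hl0] at h2
      exact h2
    have hle := second_deriv_nonpos_of_isLocalMax hlocmax hev_line hq
    have hid : pd j (pd j g) x₀ = pd j (pd j φ) x₀ - μ * pd j (pd j u) x₀ := by
      show fderiv ℝ (pd j g) x₀ _ = _
      rw [hgrep.fderiv_eq, fderiv_fun_sub hpdφd ((hpd_diff j x₀ hx₀V).const_mul μ),
        fderiv_const_mul (hpd_diff j x₀ hx₀V) μ]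
      simp [pd]
    rw [hid] at hle
    exact hle
  -- sum up
  have hφlap : ∀ j : Fin (n+1), pd j (pd j φ) x₀ = -(ε^2 * φ x₀) := by
    intro j
    rw [hφdef]
    exact pd_pd_cosprod ε c j x₀
  have hsum : ∑ j : Fin (n+1), (pd j (pd j φ) x₀ - μ * pd j (pd j u) x₀) ≤ 0 :=
    Finset.sum_nonpos fun j _ => hkey j
  have hA : ∑ j : Fin (n+1), pd j (pd j φ) x₀ = -(((n:ℝ)+1) * (ε^2 * φ x₀)) := by
    rw [Finset.sum_congr rfl fun j _ => hφlap j]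
    simp [Finset.card_univ]
    try ring
  have hB : ∑ j : Fin (n+1), pd j (pd j u) x₀ = lap u x₀ := rfl
  rw [Finset.sum_sub_distrib, ← Finset.mul_sum, hA, hB] at hsum
  -- use the equation
  have hequ : lap u x₀ = -f (u x₀) := by
    have := heq x₀ hx₀V
    linarith
  rw [hequ] at hsum
  have hfu : c₀ * u x₀ - c₁ ≤ f (u x₀) := hf (u x₀) hux₀
  -- final contradiction
  have hεφ : ((n:ℝ)+1) * (ε^2 * φ x₀) = (c₀/2) * (μ * u x₀) := by
    rw [← hφx₀, ← mul_assoc, hε2]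
  have hineq : c₀ * u x₀ ≤ 2 * c₁ := by
    rw [hεφ] at hsum
    nlinarith [hμpos, hfu]
  -- lower bound on u x₀
  have hx₀lst : sh - R ≤ x₀ lst := hKblst x₀ hx₀Kb
  have hgrowth := hKbgrow x₀ hx₀Kb
  have hfield : η * (2 * c₁ / (c₀ * η)) = 2 * c₁ / c₀ := by
    field_simp
  have hfield2 : c₀ * (2 * c₁ / c₀) = 2 * c₁ := by
    field_simp
  nlinarith [mul_le_mul_of_nonneg_left (by linarith [hshR] : 1 + 2 * c₁ / (c₀ * η) ≤ x₀ lst - 1) (le_of_lt hη),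
    mul_le_mul_of_nonneg_left (by linarith [hgrowth, mul_le_mul_of_nonneg_left (by linarith [hshR] : 1 + 2 * c₁ / (c₀ * η) ≤ x₀ lst - 1) (le_of_lt hη), hfield] : 2 * c₁ / c₀ + η ≤ u x₀) (le_of_lt hc₀), hfield2, mul_pos hc₀ hη]
end
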